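/- For every n ≥ 4, on the single-peaked preference domain (with respect to the order o_1 ▷ o_2 ▷ ⋯ ▷ o_n) there exists a mechanism that is locally unanimous and strategy-proof but is not group strategy-proof and differs from the TTC mechanism. -/

import Mathlib

/- Housing market model (Shapley–Scarf). Agents and objects are identified:
the type `I` is the (finite) set of agents, and object `i` (the endowment of
agent `i`) is identified with `i` itself. A strict preference is a linear
order on `I` (viewed as the set of objects); a preference domain is a set of
linear orders; a mechanism maps preference profiles to assignments `I → I`
(an allocation being a bijective assignment). -/

open Finset

variable {I : Type*} [DecidableEq I]

/-- The most preferred object of `S` under the linear order `p`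
(`d` is a junk default, used only when `S = ∅`). -/
def favIn (p : LinearOrder I) (S : Finset I) (d : I) : I :=
  if h : S.Nonempty then @Finset.max' I p S h else d

/-- The top choice of preference `p` (`d` is a junk default, used only if `I` is empty). -/
def topOf [Fintype I] (p : LinearOrder I) (d : I) : I := favIn p Finset.univ d

/-- The agents of `S` lying on a cycle of the pointing map `fun i => fav i S`
(each agent points to the owner of his favorite remaining object; a cycle
closes within at most `S.card` steps). -/
def cyclicAgents (fav : I → Finset I → I) (S : Finset I) : Finset I :=
  S.filter fun i => ∃ k ∈ Finset.range S.card, (fun j => fav j S)^[k + 1] i = i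

lemma cyclicAgents_subset (fav : I → Finset I → I) (S : Finset I) :
    cyclicAgents fav S ⊆ S := Finset.filter_subset _ _

/-- The TTC procedure on the set `S` of remaining agents: every agent of `S`
lying on a pointing cycle receives the object owned by the agent he points to
and is removed; the procedure is then repeated on the remaining agents.
(Agents outside `S` keep their endowments; when the pointing map sends `S`
into `S` — as is always the case for pointing maps induced by preferences —
there always is a cycle, so the degenerate `else` branch is never reached.) -/
def TTCaux (fav : I → Finset I → I) (S : Finset I) : I → I :=
  if hC : (cyclicAgents fav S).Nonempty then fun i =>
    if i ∈ cyclicAgents fav S then fav i S else TTCaux fav (S \ cyclicAgents fav S) i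
  else id
termination_by S.card
decreasing_by
  exact Finset.card_lt_card (Finset.sdiff_ssubset (cyclicAgents_subset fav S) hC)

/-- The Top Trading Cycles mechanism. -/
def TTC [Fintype I] (P : I → LinearOrder I) : I → I :=
  TTCaux (fun i S => favIn (P i) S i) Finset.univ

section Axioms

variable [Fintype I]

/-- `ψ` is locally unanimous on the domain `D`: whenever some nonempty set `J`
of agents admits a unanimously best suballocation `μ` (a bijection of `J` onto
its endowment set `O_J = J` giving every member his top choice), `ψ` implements `μ` on `J`. -/
def LocallyUnanimous (D : Set (LinearOrder I)) (ψ : (I → LinearOrder I) → I → I) : Prop :=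
  ∀ P : I → LinearOrder I, (∀ i, P i ∈ D) →
    ∀ J : Finset I, J.Nonempty → ∀ μ : I → I, Set.BijOn μ ↑J ↑J →
      (∀ i ∈ J, μ i = topOf (P i) i) → ∀ i ∈ J, ψ P i = μ i

/-- Strategy-proofness of `ψ` on the domain `D`. -/
def StrategyProof (D : Set (LinearOrder I)) (ψ : (I → LinearOrder I) → I → I) : Prop :=
  ∀ P : I → LinearOrder I, (∀ i, P i ∈ D) → ∀ i : I, ∀ q ∈ D,
    ¬ (P i).lt (ψ P i) (ψ (Function.update P i q) i)

/-- Group strategy-proofness of `ψ` on the domain `D`. -/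
def GroupStrategyProof (D : Set (LinearOrder I)) (ψ : (I → LinearOrder I) → I → I) : Prop :=
  ∀ P P' : I → LinearOrder I, (∀ i, P i ∈ D) → (∀ i, P' i ∈ D) →
    ∀ J : Finset I, J.Nonempty → (∀ i ∉ J, P' i = P i) →
    ¬ ((∀ i ∈ J, (P i).le (ψ P i) (ψ P' i)) ∧ ∃ j ∈ J, (P j).lt (ψ P j) (ψ P' j))

/-- Individual rationality of `ψ` on the domain `D` (agent `i`'s endowment is `i`). -/
def IndividuallyRational (D : Set (LinearOrder I)) (ψ : (I → LinearOrder I) → I → I) : Prop :=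
  ∀ P : I → LinearOrder I, (∀ i, P i ∈ D) → ∀ i : I, (P i).le i (ψ P i)

/-- Top-one Richness of the domain `D`. -/
def TopOneRich (D : Set (LinearOrder I)) : Prop :=
  ∀ o : I, ∃ p ∈ D, topOf p o = o

/-- Top-two Richness of the domain `D`: any two distinct objects can be
reported as the top two choices, in either order. -/
def TopTwoRich (D : Set (LinearOrder I)) : Prop :=
  ∀ o o' : I, o ≠ o' → ∃ p ∈ D, topOf p o = o ∧ ∀ x : I, x ≠ o → p.le x o'

/-- `J` forms a cycle of the pointing map `f`: `J` is nonempty, closed under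
`f`, and every member is reachable from every member by iterating `f`. -/
def IsCycleIn (f : I → I) (J : Finset I) : Prop :=
  J.Nonempty ∧ (∀ i ∈ J, f i ∈ J) ∧ ∀ i ∈ J, ∀ j ∈ J, ∃ k : ℕ, f^[k] i = j

end Axioms

/-- `p` is single-peaked with respect to the order `o_1 ▷ o_2 ▷ ⋯ ▷ o_n` of the
objects (encoded as the natural order on `Fin n`, where `a ▷ b` iff `a < b`). -/
def SinglePeaked {n : ℕ} (p : LinearOrder (Fin n)) : Prop :=
  ∃ peak : Fin n, (∀ o : Fin n, o ≠ peak → p.lt o peak) ∧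
    ∀ o o' : Fin n, o ≠ peak → o' ≠ peak → o ≠ o' →
      ((o < o' ∧ o' < peak) ∨ (peak < o' ∧ o' < o)) → p.lt o o'

set_option linter.unusedVariables false
set_option linter.unusedSectionVars false
set_option linter.dupNamespace false
set_option maxHeartbeats 1000000

/-! ### Part A: generic theory of TTC -/

namespace TTCthy

lemma favIn_mem (p : LinearOrder I) {S : Finset I} (hS : S.Nonempty) (d : I) :
    favIn p S d ∈ S := by
  rw [favIn, dif_pos hS]; exact @Finset.max'_mem I p S hS

lemma le_favIn (p : LinearOrder I) {S : Finset I} {y : I} (hy : y ∈ S) (d : I) :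
    p.le y (favIn p S d) := by
  have hS : S.Nonempty := ⟨y, hy⟩
  rw [favIn, dif_pos hS]; exact @Finset.le_max' I p S y hy

lemma favIn_eq_of (p : LinearOrder I) {S : Finset I} {x : I} (d : I)
    (hx : x ∈ S) (h : ∀ y ∈ S, p.le y x) : favIn p S d = x :=
  p.le_antisymm _ _ (h _ (favIn_mem p ⟨x, hx⟩ d)) (le_favIn p hx d)

lemma favIn_subset (p : LinearOrder I) {S' S : Finset I} (hsub : S' ⊆ S) (d : I)
    (hmem : favIn p S d ∈ S') : favIn p S' d = favIn p S d :=
  favIn_eq_of p d hmem (fun y hy => le_favIn p (hsub hy) d)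

/-- if `x` is periodic and `i` is on the orbit of `x`, then `i` is periodic
with the same exponent. -/
lemma periodic_shift (f : I → I) {x i : I} {a m : ℕ} (hx : f^[a] x = x)
    (hi : f^[m] x = i) : f^[a] i = i := by
  subst hi
  rw [← Function.iterate_add_apply, Nat.add_comm, Function.iterate_add_apply, hx]

lemma iterate_mul_fixed (f : I → I) {x : I} {a : ℕ} (hx : f^[a] x = x) (k : ℕ) :
    f^[a * k] x = x := by
  rw [Function.iterate_mul]
  exact Function.iterate_fixed hx k

lemma iterate_mem (f : I → I) {S : Finset I} (hf : ∀ j ∈ S, f j ∈ S) {i : I}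
    (hi : i ∈ S) : ∀ m, f^[m] i ∈ S := by
  intro m
  induction m with
  | zero => exact hi
  | succ m ih => rw [Function.iterate_succ_apply']; exact hf _ ih

lemma exists_repeat (f : I → I) {S : Finset I} (hf : ∀ j ∈ S, f j ∈ S) {i : I}
    (hi : i ∈ S) : ∃ b c : ℕ, b < c ∧ c ≤ S.card ∧ f^[b] i = f^[c] i := by
  have hmap : ∀ m ∈ Finset.range (S.card + 1), f^[m] i ∈ S :=
    fun m _ => iterate_mem f hf hi m
  have hcard : S.card < (Finset.range (S.card + 1)).card := by
    rw [Finset.card_range]; omega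
  obtain ⟨b, hb, c, hc, hbc, heq⟩ :=
    Finset.exists_ne_map_eq_of_card_lt_of_maps_to hcard hmap
  simp only [Finset.mem_range] at hb hc
  rcases Nat.lt_or_ge b c with h | h
  · exact ⟨b, c, h, by omega, heq⟩
  · have : c < b := by omega
    exact ⟨c, b, this, by omega, heq.symm⟩

/-- A periodic point of the pointing map (with any positive exponent) has a
period at most `S.card`. -/
lemma exists_period_le_card (f : I → I) {S : Finset I} (hf : ∀ j ∈ S, f j ∈ S)
    {i : I} (hi : i ∈ S) {a : ℕ} (ha : 0 < a) (hper : f^[a] i = i) :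
    ∃ k, k < S.card ∧ f^[k + 1] i = i := by
  obtain ⟨b, c, hbc, hc, heq⟩ := exists_repeat f hf hi
  have hN : f^[a * (b + 1)] i = i := iterate_mul_fixed f hper (b + 1)
  set N := a * (b + 1) with hNdef
  have hNb : b ≤ N := by
    have : b + 1 ≤ a * (b + 1) := Nat.le_mul_of_pos_left _ ha
    omega
  have key : f^[c - b] i = i := by
    have h1 : f^[(N - b) + b] i = i := by rw [Nat.sub_add_cancel hNb]; exact hN
    have h2 : f^[N - b] (f^[b] i) = i := by
      rw [← Function.iterate_add_apply]; exact h1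
    have h3 : f^[N - b] (f^[c] i) = i := by rw [← heq]; exact h2
    have h4 : f^[(N - b) + c] i = i := by
      rw [Function.iterate_add_apply]; exact h3
    have h5 : (N - b) + c = (c - b) + N := by omega
    have h6 : f^[(c - b) + N] i = i := by rw [← h5]; exact h4
    have h7 : f^[c - b] (f^[N] i) = i := by
      rw [← Function.iterate_add_apply]; exact h6
    rw [hN] at h7; exact h7
  exact ⟨c - b - 1, by omega, by
    have : c - b - 1 + 1 = c - b := by omega
    rw [this]; exact key⟩

variable {fav : I → Finset I → I}

lemma mem_cyclicAgents_iff {S : Finset I} {i : I} :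
    i ∈ cyclicAgents fav S ↔
      i ∈ S ∧ ∃ k, k < S.card ∧ (fun j => fav j S)^[k + 1] i = i := by
  simp [cyclicAgents, Finset.mem_filter, Finset.mem_range]

/-- fav maps everything into S (when S is nonempty). -/
def FavMem (fav : I → Finset I → I) : Prop :=
  ∀ S : Finset I, S.Nonempty → ∀ i, fav i S ∈ S

lemma favP_mem (P : I → LinearOrder I) : FavMem (fun i S => favIn (P i) S i) :=
  fun _ hS i => favIn_mem (P i) hS i

lemma mem_cyclicAgents_of_periodic (Hmem : FavMem fav) {S : Finset I} {i : I}
    (hi : i ∈ S) {a : ℕ} (ha : 0 < a)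
    (h : (fun j => fav j S)^[a] i = i) : i ∈ cyclicAgents fav S := by
  have hf : ∀ j ∈ S, (fun j => fav j S) j ∈ S := fun j _ => Hmem S ⟨i, hi⟩ j
  obtain ⟨k, hk, hper⟩ := exists_period_le_card _ hf hi ha h
  exact mem_cyclicAgents_iff.mpr ⟨hi, k, hk, hper⟩

lemma cyclicAgents_nonempty (Hmem : FavMem fav) {S : Finset I} (hS : S.Nonempty) :
    (cyclicAgents fav S).Nonempty := by
  obtain ⟨i, hi⟩ := hS
  have hf : ∀ j ∈ S, (fun j => fav j S) j ∈ S := fun j _ => Hmem S ⟨i, hi⟩ j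
  obtain ⟨b, c, hbc, hc, heq⟩ := exists_repeat _ hf hi
  refine ⟨(fun j => fav j S)^[b] i, ?_⟩
  have hmem : (fun j => fav j S)^[b] i ∈ S := iterate_mem _ hf hi b
  apply mem_cyclicAgents_of_periodic Hmem hmem (a := c - b) (by omega)
  have : (fun j => fav j S)^[c - b] ((fun j => fav j S)^[b] i)
      = (fun j => fav j S)^[(c - b) + b] i := by
    rw [Function.iterate_add_apply]
  rw [this]
  have hcb : c - b + b = c := by omega
  rw [hcb, ← heq]

lemma cyclicAgents_closed (Hmem : FavMem fav) {S : Finset I} {i : I}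
    (hi : i ∈ cyclicAgents fav S) : fav i S ∈ cyclicAgents fav S := by
  obtain ⟨hiS, k, hk, hper⟩ := mem_cyclicAgents_iff.mp hi
  set f := fun j => fav j S with hf
  have hfi : fav i S = f i := rfl
  have hper' : f^[k + 1] (f i) = f i := by
    rw [← Function.iterate_succ_apply, Function.iterate_succ_apply', hper]
  rw [hfi]
  exact mem_cyclicAgents_of_periodic Hmem (Hmem S ⟨i, hiS⟩ i) (Nat.succ_pos k) hper'

lemma injOn_cyclicAgents (Hmem : FavMem fav) {S : Finset I} :
    Set.InjOn (fun j => fav j S) ↑(cyclicAgents fav S) := by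
  intro a ha b hb hab
  simp only [Finset.mem_coe] at ha hb
  obtain ⟨-, ka, -, hpa⟩ := mem_cyclicAgents_iff.mp ha
  obtain ⟨-, kb, -, hpb⟩ := mem_cyclicAgents_iff.mp hb
  set f := fun j => fav j S with hf
  set N := (ka + 1) * (kb + 1) with hN
  have hNa : f^[N] a = a := iterate_mul_fixed f hpa (kb + 1)
  have hNb : f^[N] b = b := by
    rw [hN, Nat.mul_comm]; exact iterate_mul_fixed f hpb (ka + 1)
  have hN1 : N = (N - 1) + 1 := by
    have : 1 ≤ N := by rw [hN]; exact Nat.one_le_iff_ne_zero.mpr (by positivity)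
    omega
  have hstep : ∀ y : I, f^[N] y = f^[N-1] (f y) := by
    intro y
    conv_lhs => rw [hN1]
    rw [Function.iterate_succ_apply]
  calc a = f^[N] a := hNa.symm
    _ = f^[N - 1] (f a) := hstep a
    _ = f^[N - 1] (f b) := by rw [show f a = f b from hab]
    _ = f^[N] b := (hstep b).symm
    _ = b := hNb

/-! TTCaux unfolding lemmas -/

lemma TTCaux_cyclic {S : Finset I} {i : I} (hi : i ∈ cyclicAgents fav S) :
    TTCaux fav S i = fav i S := by
  rw [TTCaux, dif_pos ⟨i, hi⟩]
  simp [hi]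

lemma TTCaux_not_cyclic {S : Finset I} {i : I}
    (hC : (cyclicAgents fav S).Nonempty) (hi : i ∉ cyclicAgents fav S) :
    TTCaux fav S i = TTCaux fav (S \ cyclicAgents fav S) i := by
  rw [TTCaux, dif_pos hC]
  simp [hi]

lemma TTCaux_off : ∀ (S : Finset I), ∀ i ∉ S, TTCaux fav S i = i := by
  intro S
  induction S using Finset.strongInduction with
  | _ S ih =>
    intro i hi
    by_cases hC : (cyclicAgents fav S).Nonempty
    · have hic : i ∉ cyclicAgents fav S := fun h => hi (cyclicAgents_subset fav S h)
      rw [TTCaux_not_cyclic hC hic]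
      exact ih _ (Finset.sdiff_ssubset (cyclicAgents_subset fav S) hC) i
        (fun h => hi (Finset.mem_sdiff.mp h).1)
    · rw [TTCaux, dif_neg hC]; rfl

lemma TTCaux_mem (Hmem : FavMem fav) :
    ∀ (S : Finset I), ∀ i ∈ S, TTCaux fav S i ∈ S := by
  intro S
  induction S using Finset.strongInduction with
  | _ S ih =>
    intro i hi
    have hC : (cyclicAgents fav S).Nonempty := cyclicAgents_nonempty Hmem ⟨i, hi⟩
    by_cases hic : i ∈ cyclicAgents fav S
    · rw [TTCaux_cyclic hic]; exact Hmem S ⟨i, hi⟩ i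
    · rw [TTCaux_not_cyclic hC hic]
      have hi' : i ∈ S \ cyclicAgents fav S := Finset.mem_sdiff.mpr ⟨hi, hic⟩
      exact Finset.sdiff_subset
        (ih _ (Finset.sdiff_ssubset (cyclicAgents_subset fav S) hC) i hi')

lemma TTCaux_surjOn (Hmem : FavMem fav) :
    ∀ (S : Finset I), ∀ y ∈ S, ∃ i ∈ S, TTCaux fav S i = y := by
  intro S
  induction S using Finset.strongInduction with
  | _ S ih =>
    intro y hy
    have hC : (cyclicAgents fav S).Nonempty := cyclicAgents_nonempty Hmem ⟨y, hy⟩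
    by_cases hyc : y ∈ cyclicAgents fav S
    · set C := cyclicAgents fav S with hCdef
      have himg : C.image (fun j => fav j S) = C := by
        apply Finset.eq_of_subset_of_card_le
        · intro x hx
          obtain ⟨j, hj, hjx⟩ := Finset.mem_image.mp hx
          rw [← hjx]; exact cyclicAgents_closed Hmem hj
        · rw [Finset.card_image_of_injOn (injOn_cyclicAgents Hmem)]
      have : y ∈ C.image (fun j => fav j S) := by rw [himg]; exact hyc
      obtain ⟨i, hiC, hfi⟩ := Finset.mem_image.mp this
      exact ⟨i, cyclicAgents_subset fav S hiC, by rw [TTCaux_cyclic hiC]; exact hfi⟩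
    · have hy' : y ∈ S \ cyclicAgents fav S := Finset.mem_sdiff.mpr ⟨hy, hyc⟩
      obtain ⟨i, hi, h⟩ :=
        ih _ (Finset.sdiff_ssubset (cyclicAgents_subset fav S) hC) y hy'
      have hic : i ∉ cyclicAgents fav S := (Finset.mem_sdiff.mp hi).2
      exact ⟨i, (Finset.mem_sdiff.mp hi).1, by rw [TTCaux_not_cyclic hC hic]; exact h⟩

lemma TTC_bijective [Fintype I] (P : I → LinearOrder I) :
    Function.Bijective (TTC P) := by
  have hsurj : Function.Surjective (TTC P) := by
    intro y
    obtain ⟨i, -, h⟩ := TTCaux_surjOn (favP_mem P) Finset.univ y (Finset.mem_univ y)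
    exact ⟨i, h⟩
  exact Finite.surjective_iff_bijective.mp hsurj

/-! ### Strategy-proofness of TTC -/

section SP

variable [Fintype I] (P : I → LinearOrder I)

/-- Key chain lemma: if from `x` (in `S`) the current truthful pointing map
reaches `i ∈ S`, then `i`'s eventual assignment is weakly preferred to `x`. -/
lemma key_chain (i : I) :
    ∀ (S : Finset I), i ∈ S → ∀ x ∈ S,
      (∃ k, (fun j => favIn (P j) S j)^[k] x = i) →
      (P i).le x (TTCaux (fun j T => favIn (P j) T j) S i) := by
  classical
  intro S
  induction S using Finset.strongInduction with
  | _ S ih =>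
    intro hiS x hxS hex
    set fv : I → Finset I → I := fun j T => favIn (P j) T j with hfv
    set f := fun j => favIn (P j) S j with hfdef
    have hC : (cyclicAgents fv S).Nonempty :=
      cyclicAgents_nonempty (favP_mem P) ⟨i, hiS⟩
    by_cases hic : i ∈ cyclicAgents fv S
    · rw [TTCaux_cyclic hic]
      exact le_favIn (P i) hxS i
    · -- take the minimal chain length
      have hexd : ∃ k, f^[k] x = i := hex
      set k0 := Nat.find hexd with hk0
      have hk0spec : f^[k0] x = i := Nat.find_spec hexd
      have hk0min : ∀ m, m < k0 → f^[m] x ≠ i := fun m hm => Nat.find_min hexd hm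
      -- no chain element is cyclic
      have hchain_nc : ∀ m, m ≤ k0 → f^[m] x ∉ cyclicAgents fv S := by
        intro m hm hmem
        obtain ⟨hmS, a, ha, hpa⟩ := mem_cyclicAgents_iff.mp hmem
        have hi_on : f^[k0 - m] (f^[m] x) = i := by
          rw [← Function.iterate_add_apply]
          have : k0 - m + m = k0 := by omega
          rw [this]; exact hk0spec
        have : f^[a + 1] i = i := periodic_shift f hpa hi_on
        exact hic (mem_cyclicAgents_of_periodic (favP_mem P) hiS (Nat.succ_pos a) this)
      -- chain elements are in S
      have hfmapS : ∀ j ∈ S, f j ∈ S := fun j _ => favP_mem P S ⟨i, hiS⟩ j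
      have hchain_S : ∀ m, m ≤ k0 → f^[m] x ∈ S := fun m _ => iterate_mem f hfmapS hxS m
      set S' := S \ cyclicAgents fv S with hS'
      have hiS' : i ∈ S' := Finset.mem_sdiff.mpr ⟨hiS, hic⟩
      have hxS' : x ∈ S' := by
        have := hchain_nc 0 (Nat.zero_le _)
        exact Finset.mem_sdiff.mpr ⟨hxS, this⟩
      -- the chain transfers to S'
      set f' := fun j => favIn (P j) S' j with hf'def
      have htrans : ∀ m, m ≤ k0 → f'^[m] x = f^[m] x := by
        intro m hm
        induction m with
        | zero => rfl
        | succ m ihm =>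
          have hm' : m ≤ k0 := by omega
          rw [Function.iterate_succ_apply', ihm hm', Function.iterate_succ_apply']
          show favIn (P (f^[m] x)) S' (f^[m] x) = f (f^[m] x)
          apply favIn_subset (P (f^[m] x)) Finset.sdiff_subset
          show f (f^[m] x) ∈ S'
          have h1 : f (f^[m] x) = f^[m+1] x := (Function.iterate_succ_apply' f m x).symm
          rw [h1]
          exact Finset.mem_sdiff.mpr ⟨hchain_S (m+1) (by omega), hchain_nc (m+1) (by omega)⟩
      rw [TTCaux_not_cyclic hC hic]
      apply ih S' (Finset.sdiff_ssubset (cyclicAgents_subset fv S) hC) hiS' x hxS'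
      exact ⟨k0, by rw [htrans k0 le_rfl]; exact hk0spec⟩

/-- iterates of two maps agreeing off `i` coincide along orbits avoiding `i`. -/
lemma iter_eq_of_avoid {f g : I → I} {i : I} (hfg : ∀ x, x ≠ i → f x = g x)
    {x : I} {m : ℕ} (havoid : ∀ l, l < m → f^[l] x ≠ i) :
    f^[m] x = g^[m] x := by
  induction m with
  | zero => rfl
  | succ m ihm =>
    have h1 : ∀ l, l < m → f^[l] x ≠ i := fun l hl => havoid l (by omega)
    rw [Function.iterate_succ_apply', Function.iterate_succ_apply', ihm h1,
      ← ihm h1, hfg _ (havoid m (by omega))]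

end SP

section SP2

variable [Fintype I] (P : I → LinearOrder I) (i : I) (q : LinearOrder I)

/-- cycles not through a non-cyclic deviator coincide for truth and lie. -/
lemma cyc_eq_aux {P' : I → LinearOrder I} (hP' : ∀ j, j ≠ i → P' j = P j)
    {S : Finset I} (hiS : i ∈ S)
    (hic : i ∉ cyclicAgents (fun j T => favIn (P j) T j) S) :
    cyclicAgents (fun j T => favIn (P j) T j) S ⊆
      cyclicAgents (fun j T => favIn (P' j) T j) S := by
  intro jj hjj
  obtain ⟨hjS, k, hk, hper⟩ := mem_cyclicAgents_iff.mp hjj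
  set f := fun j => favIn (P j) S j with hfdef
  set g := fun j => favIn (P' j) S j with hgdef
  have hfg : ∀ x, x ≠ i → f x = g x := by
    intro x hx
    show favIn (P x) S x = favIn (P' x) S x
    rw [hP' x hx]
  have havoid : ∀ l, l < k + 1 → f^[l] jj ≠ i := by
    intro l hl heq
    have : f^[k + 1] i = i := periodic_shift f hper heq
    exact hic (mem_cyclicAgents_of_periodic (favP_mem P) hiS (Nat.succ_pos k) this)
  have : g^[k + 1] jj = jj := by
    rw [← iter_eq_of_avoid hfg havoid]; exact hper
  exact mem_cyclicAgents_iff.mpr ⟨hjS, k, hk, this⟩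

/-- The main strategy-proofness induction. -/
lemma main_sp :
    ∀ (S : Finset I), i ∈ S →
      (P i).le (TTCaux (fun j T => favIn (Function.update P i q j) T j) S i)
        (TTCaux (fun j T => favIn (P j) T j) S i) := by
  classical
  intro S
  induction S using Finset.strongInduction with
  | _ S ih =>
    intro hiS
    set P' := Function.update P i q with hP'def
    have hP'eq : ∀ j, j ≠ i → P' j = P j := fun j hj => Function.update_of_ne hj q P
    set fv : I → Finset I → I := fun j T => favIn (P j) T j with hfv
    set fv' : I → Finset I → I := fun j T => favIn (P' j) T j with hfv'
    have hC : (cyclicAgents fv S).Nonempty := cyclicAgents_nonempty (favP_mem P) ⟨i, hiS⟩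
    have hC' : (cyclicAgents fv' S).Nonempty := cyclicAgents_nonempty (favP_mem P') ⟨i, hiS⟩
    by_cases h1 : i ∈ cyclicAgents fv S
    · rw [TTCaux_cyclic h1]
      have hmem : TTCaux fv' S i ∈ S := TTCaux_mem (favP_mem P') S i hiS
      exact le_favIn (P i) hmem i
    · by_cases h2 : i ∈ cyclicAgents fv' S
      · -- the lie trades now; truth eventually gets something at least as good
        rw [TTCaux_cyclic h2]
        set x := fv' i S with hxdef
        have hxS : x ∈ S := favP_mem P' S ⟨i, hiS⟩ i
        -- chain from x to i under the lie pointing map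
        obtain ⟨-, k, -, hper⟩ := mem_cyclicAgents_iff.mp h2
        set g := fun j => favIn (P' j) S j with hgdef
        have hgx : g^[k] x = i := by
          have : g^[k] (g i) = g^[k+1] i := (Function.iterate_succ_apply g k i).symm
          rw [show x = g i from rfl, this, hper]
        -- transfer an initial chain to the truthful pointing map
        have hexg : ∃ m, g^[m] x = i := ⟨k, hgx⟩
        set m0 := Nat.find hexg with hm0
        have hm0spec : g^[m0] x = i := Nat.find_spec hexg
        have hm0min : ∀ l, l < m0 → g^[l] x ≠ i := fun l hl => Nat.find_min hexg hl
        set f := fun j => favIn (P j) S j with hfdef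
        have hfg : ∀ y, y ≠ i → g y = f y := by
          intro y hy
          show favIn (P' y) S y = favIn (P y) S y
          rw [hP'eq y hy]
        have : f^[m0] x = i := by
          rw [← iter_eq_of_avoid hfg hm0min]; exact hm0spec
        exact key_chain P i S hiS x hxS ⟨m0, this⟩
      · -- neither is cyclic now: the removed cycles coincide, recurse
        have hsub1 := cyc_eq_aux P i (P' := P') hP'eq hiS h1
        have hsub2 : cyclicAgents fv' S ⊆ cyclicAgents fv S := by
          have h := cyc_eq_aux P' i (P' := P) (fun j hj => (hP'eq j hj).symm) hiS h2
          exact h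
        have hceq : cyclicAgents fv S = cyclicAgents fv' S :=
          Finset.Subset.antisymm hsub1 hsub2
        rw [TTCaux_not_cyclic hC h1, TTCaux_not_cyclic hC' h2, ← hceq]
        have hiS' : i ∈ S \ cyclicAgents fv S := Finset.mem_sdiff.mpr ⟨hiS, h1⟩
        exact ih _ (Finset.sdiff_ssubset (cyclicAgents_subset fv S) hC) hiS'

/-- TTC is strategy-proof (on all profiles). -/
theorem TTC_SP :
    ¬ (P i).lt (TTC P i) (TTC (Function.update P i q) i) := by
  have h := main_sp P i q Finset.univ (Finset.mem_univ i)
  intro hlt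
  letI := P i
  exact absurd h (not_le.mpr hlt)

end SP2

/-! ### Local unanimity of TTC -/

section LU

variable [Fintype I]

lemma injOn_iter_cancel {f : I → I} {J : Finset I} (hmap : ∀ j ∈ J, f j ∈ J)
    (hinj : ∀ a ∈ J, ∀ b ∈ J, f a = f b → a = b) {i : I} (hi : i ∈ J) :
    ∀ b c : ℕ, b ≤ c → f^[b] i = f^[c] i → f^[c - b] i = i := by
  intro b
  induction b with
  | zero => intro c _ h; simpa using h.symm
  | succ b ihb =>
    intro c hbc h
    obtain ⟨d, rfl⟩ : ∃ d, c = d + 1 := ⟨c - 1, by omega⟩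
    have hb' : b ≤ d := by omega
    have h1 : f (f^[b] i) = f (f^[d] i) := by
      rw [← Function.iterate_succ_apply' f b i, ← Function.iterate_succ_apply' f d i]
      exact h
    have h2 : f^[b] i = f^[d] i :=
      hinj _ (iterate_mem f hmap hi b) _ (iterate_mem f hmap hi d) h1
    have := ihb d hb' h2
    have hdb : d + 1 - (b + 1) = d - b := by omega
    rw [hdb]; exact this

theorem TTC_LU (P : I → LinearOrder I) (J : Finset I) (μ : I → I)
    (hbij : Set.BijOn μ ↑J ↑J) (hμ : ∀ i ∈ J, μ i = topOf (P i) i) :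
    ∀ i ∈ J, TTC P i = μ i := by
  intro i hiJ
  set f := fun j => favIn (P j) Finset.univ j with hfdef
  have hfμ : ∀ j ∈ J, f j = μ j := by
    intro j hj
    rw [hμ j hj]; rfl
  have hmap : ∀ j ∈ J, f j ∈ J := by
    intro j hj; rw [hfμ j hj]
    exact hbij.mapsTo hj
  have hinj : ∀ a ∈ J, ∀ b ∈ J, f a = f b → a = b := by
    intro a ha b hb h
    exact hbij.injOn ha hb (by rw [← hfμ a ha, ← hfμ b hb]; exact h)
  obtain ⟨b, c, hbc, hc, heq⟩ := exists_repeat f hmap hiJ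
  have hper : f^[c - b] i = i := injOn_iter_cancel hmap hinj hiJ b c (by omega) heq
  have hcyc : i ∈ cyclicAgents (fun j T => favIn (P j) T j) Finset.univ := by
    apply mem_cyclicAgents_of_periodic (favP_mem P) (Finset.mem_univ i) (by omega : 0 < c - b)
    exact hper
  rw [TTC, TTCaux_cyclic hcyc]
  exact hfμ i hiJ

end LU


/-! ### Computation helper: identify the cyclic agents -/

lemma cyclicAgents_eq {fav : I → Finset I → I} {S C : Finset I} (hCS : C ⊆ S)
    (hper : ∀ i ∈ C, ∃ k, k < S.card ∧ (fun j => fav j S)^[k + 1] i = i)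
    (ρ : I → ℕ)
    (hstep : ∀ j ∈ S, j ∉ C →
      (fav j S ∈ C ∨ (fav j S ∈ S ∧ fav j S ∉ C ∧ ρ (fav j S) < ρ j)))
    (hclosed : ∀ j ∈ C, fav j S ∈ C) :
    cyclicAgents fav S = C := by
  apply Finset.Subset.antisymm
  · intro i hi
    obtain ⟨hiS, k, hk, hper'⟩ := mem_cyclicAgents_iff.mp hi
    by_contra hiC
    set f := fun j => fav j S with hfdef
    have key : ∀ m, (f^[m + 1] i ∈ C) ∨
        (f^[m + 1] i ∈ S ∧ f^[m + 1] i ∉ C ∧ ρ (f^[m + 1] i) < ρ i) := by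
      intro m
      induction m with
      | zero =>
        simpa using hstep i hiS hiC
      | succ m ihm =>
        rcases ihm with h | ⟨hS', hC', hρ⟩
        · left; rw [Function.iterate_succ_apply']; exact hclosed _ h
        · rcases hstep _ hS' hC' with h2 | ⟨h3, h4, h5⟩
          · left; rw [Function.iterate_succ_apply']; exact h2
          · right; rw [Function.iterate_succ_apply']
            exact ⟨h3, h4, Nat.lt_trans h5 hρ⟩
    rcases key k with h | ⟨-, -, hρ⟩
    · rw [hper'] at h; exact hiC h
    · rw [hper'] at hρ; omega
  · intro i hi
    exact mem_cyclicAgents_iff.mpr ⟨hCS hi, hper i hi⟩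

end TTCthy

/-! ### Part B : the concrete single-peaked preferences -/

namespace Stmt13

open TTCthy

/-- linear order on `Fin n` from an injective utility function (larger = better). -/
def ofUtil {n : ℕ} (u : Fin n → ℕ) (h : Function.Injective u) : LinearOrder (Fin n) :=
  LinearOrder.lift' u h

lemma ofUtil_le {n : ℕ} (u : Fin n → ℕ) (h : Function.Injective u) (a b : Fin n) :
    (ofUtil u h).le a b ↔ u a ≤ u b := Iff.rfl

lemma ofUtil_lt {n : ℕ} (u : Fin n → ℕ) (h : Function.Injective u) (a b : Fin n) :
    (ofUtil u h).lt a b ↔ u a < u b := by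
  rw [(ofUtil u h).lt_iff_le_not_ge a b]
  rw [ofUtil_le, ofUtil_le]
  omega

lemma favIn_ofUtil {n : ℕ} {u : Fin n → ℕ} {h : Function.Injective u}
    {S : Finset (Fin n)} {x : Fin n} (d : Fin n) (hx : x ∈ S)
    (hmax : ∀ y ∈ S, u y ≤ u x) : favIn (ofUtil u h) S d = x :=
  favIn_eq_of (ofUtil u h) d hx (fun y hy => (ofUtil_le u h y x).mpr (hmax y hy))

variable (n : ℕ)

/-- utility of the order `w = o₂ ≻ o₃ ≻ o₁ ≻ o₀ ≻ o₄ ≻ o₅ ≻ ⋯`. -/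
def uw : Fin n → ℕ := fun j =>
  if j.val = 2 then 2 * n + 4 else if j.val = 3 then 2 * n + 3 else
  if j.val = 1 then 2 * n + 2 else if j.val = 0 then 2 * n + 1 else n - j.val

/-- utility of the order `e k = o_k ≻ o_{k+1} ≻ ⋯ ≻ o_{n-1} ≻ o_{k-1} ≻ ⋯ ≻ o_0`. -/
def ue (k : ℕ) : Fin n → ℕ := fun j => if k ≤ j.val then 2 * n - j.val else j.val

lemma uw_inj : Function.Injective (uw n) := by
  intro a b hab
  have ha := a.isLt; have hb := b.isLt
  apply Fin.ext
  simp only [uw] at hab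
  split_ifs at hab <;> omega

lemma ue_inj (k : ℕ) : Function.Injective (ue n k) := by
  intro a b hab
  have ha := a.isLt; have hb := b.isLt
  apply Fin.ext
  simp only [ue] at hab
  split_ifs at hab <;> omega

def w : LinearOrder (Fin n) := ofUtil (uw n) (uw_inj n)
def ek (k : ℕ) : LinearOrder (Fin n) := ofUtil (ue n k) (ue_inj n k)
def z : LinearOrder (Fin n) := ek n 0

lemma z_le (a b : Fin n) : (z n).le a b ↔ b.val ≤ a.val := by
  rw [z, ek, ofUtil_le]
  have := a.isLt; have := b.isLt
  simp only [ue]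
  simp
  omega

lemma z_lt (a b : Fin n) : (z n).lt a b ↔ b.val < a.val := by
  rw [z, ek, ofUtil_lt]
  have := a.isLt; have := b.isLt
  simp only [ue]
  simp
  omega

lemma w_lt (a b : Fin n) : (w n).lt a b ↔ uw n a < uw n b := ofUtil_lt _ _ a b


section Objects

variable (hn : 4 ≤ n)

def a0 : Fin n := ⟨0, by omega⟩
def a1 : Fin n := ⟨1, by omega⟩
def a2 : Fin n := ⟨2, by omega⟩
def a3 : Fin n := ⟨3, by omega⟩

@[simp] lemma a0_val : (a0 n hn).val = 0 := rfl
@[simp] lemma a1_val : (a1 n hn).val = 1 := rfl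
@[simp] lemma a2_val : (a2 n hn).val = 2 := rfl
@[simp] lemma a3_val : (a3 n hn).val = 3 := rfl

/-- the special profile `P⋆`. -/
def Pstar : Fin n → LinearOrder (Fin n) := fun i =>
  if i.val = 0 ∨ i.val = 2 then w n
  else if i.val = 1 ∨ i.val = 3 then z n
  else ek n i.val

/-- the allocation chosen at `P⋆` : the trading cycle `o₀ → o₃ → o₁ → o₀`. -/
def pistar : Fin n → Fin n := fun i =>
  if i.val = 0 then a3 n hn else if i.val = 1 then a0 n hn
  else if i.val = 3 then a1 n hn else i

open Classical in
/-- the mechanism: TTC except at the single profile `P⋆`. -/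
noncomputable def psi : (Fin n → LinearOrder (Fin n)) → Fin n → Fin n :=
  fun P => if P = Pstar n then pistar n hn else TTC P

@[simp] lemma Pstar_a0 : Pstar n (a0 n hn) = w n := by simp [Pstar, a0]
@[simp] lemma Pstar_a1 : Pstar n (a1 n hn) = z n := by simp [Pstar, a1]
@[simp] lemma Pstar_a2 : Pstar n (a2 n hn) = w n := by simp [Pstar, a2]
@[simp] lemma Pstar_a3 : Pstar n (a3 n hn) = z n := by simp [Pstar, a3]

/-! single-peakedness of the orders -/

lemma sp_ek (k : ℕ) (hk : k < n) : SinglePeaked (ek n k) := by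
  refine ⟨⟨k, hk⟩, ?_, ?_⟩
  · intro o ho
    rw [ek, ofUtil_lt]
    have h1 := o.isLt
    have h2 : o.val ≠ k := fun h => ho (Fin.ext h)
    simp only [ue]
    split_ifs <;> omega
  · intro o o' ho ho' hoo' hcase
    rw [ek, ofUtil_lt]
    have h1 := o.isLt; have h2 := o'.isLt
    have h3 : o.val ≠ k := fun h => ho (Fin.ext h)
    have h4 : o'.val ≠ k := fun h => ho' (Fin.ext h)
    have h5 : o.val ≠ o'.val := fun h => hoo' (Fin.ext h)
    have hcase' : (o.val < o'.val ∧ o'.val < k) ∨ (k < o'.val ∧ o'.val < o.val) := by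
      rcases hcase with ⟨ha, hb⟩ | ⟨ha, hb⟩
      · exact Or.inl ⟨Fin.lt_def.mp ha, Fin.lt_def.mp hb⟩
      · exact Or.inr ⟨Fin.lt_def.mp ha, Fin.lt_def.mp hb⟩
    simp only [ue]
    split_ifs <;> omega

lemma sp_w (hn : 4 ≤ n) : SinglePeaked (w n) := by
  refine ⟨a2 n hn, ?_, ?_⟩
  · intro o ho
    rw [w_lt]
    have h1 := o.isLt
    have h2 : o.val ≠ 2 := fun h => ho (Fin.ext (by simpa using h))
    simp only [uw, a2_val]
    split_ifs <;> omega
  · intro o o' ho ho' hoo' hcase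
    rw [w_lt]
    have h1 := o.isLt; have h2 := o'.isLt
    have h3 : o.val ≠ 2 := fun h => ho (Fin.ext (by simpa using h))
    have h4 : o'.val ≠ 2 := fun h => ho' (Fin.ext (by simpa using h))
    have h5 : o.val ≠ o'.val := fun h => hoo' (Fin.ext h)
    have hcase' : (o.val < o'.val ∧ o'.val < 2) ∨ (2 < o'.val ∧ o'.val < o.val) := by
      rcases hcase with ⟨ha, hb⟩ | ⟨ha, hb⟩
      · exact Or.inl ⟨Fin.lt_def.mp ha, by simpa using Fin.lt_def.mp hb⟩
      · exact Or.inr ⟨by simpa using Fin.lt_def.mp ha, Fin.lt_def.mp hb⟩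
    simp only [uw]
    split_ifs <;> omega

lemma sp_z (hn : 4 ≤ n) : SinglePeaked (z n) := sp_ek n 0 (by omega)

lemma sp_Pstar (hn : 4 ≤ n) : ∀ i, SinglePeaked (Pstar n i) := by
  intro i
  simp only [Pstar]
  split_ifs
  · exact sp_w n hn
  · exact sp_z n hn
  · exact sp_ek n i.val i.isLt

end Objects


/-! ### abstract linear-order helpers -/

section LO
variable {α : Type*} (p : LinearOrder α)

lemma lo_le_refl (a : α) : p.le a a := p.le_refl a

lemma lo_le_of_lt {a b : α} (h : p.lt a b) : p.le a b :=
  ((p.lt_iff_le_not_ge a b).mp h).1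

lemma lo_not_lt_of_le {a b : α} (h : p.le a b) : ¬ p.lt b a :=
  fun hlt => ((p.lt_iff_le_not_ge b a).mp hlt).2 h

lemma lo_lt_irrefl (a : α) : ¬ p.lt a a :=
  lo_not_lt_of_le p (lo_le_refl p a)

lemma lo_lt_asymm {a b : α} (h : p.lt a b) : ¬ p.lt b a :=
  lo_not_lt_of_le p (lo_le_of_lt p h)

lemma lo_lt_trans {a b c : α} (h1 : p.lt a b) (h2 : p.lt b c) : p.lt a c := by
  obtain ⟨hab, hnba⟩ := (p.lt_iff_le_not_ge a b).mp h1
  obtain ⟨hbc, hncb⟩ := (p.lt_iff_le_not_ge b c).mp h2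
  exact (p.lt_iff_le_not_ge a c).mpr
    ⟨p.le_trans _ _ _ hab hbc, fun hca => hncb (p.le_trans _ _ _ hca hab)⟩

lemma lo_lt_or_le (a b : α) : p.lt a b ∨ p.le b a := by
  by_cases h : p.le b a
  · exact Or.inr h
  · rcases p.le_total a b with h1 | h1
    · exact Or.inl ((p.lt_iff_le_not_ge a b).mpr ⟨h1, h⟩)
    · exact absurd h1 h

end LO

namespace Stmt13

open TTCthy

variable (n : ℕ)

/-! ### peak facts for single-peaked preferences -/

lemma favIn_univ_eq_peak {q : LinearOrder (Fin n)} {pk : Fin n}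
    (h1 : ∀ o : Fin n, o ≠ pk → q.lt o pk) (d : Fin n) :
    favIn q Finset.univ d = pk := by
  apply favIn_eq_of q d (Finset.mem_univ pk)
  intro y _
  by_cases hy : y = pk
  · subst hy; exact lo_le_refl q y
  · exact lo_le_of_lt q (h1 y hy)

lemma favIn_singleton (q : LinearOrder (Fin n)) (x d : Fin n) :
    favIn q ({x} : Finset (Fin n)) d = x := by
  apply favIn_eq_of q d (Finset.mem_singleton_self x)
  intro y hy
  rw [Finset.mem_singleton] at hy
  subst hy; exact lo_le_refl q y

variable (hn : 4 ≤ n)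

/-- the unique single-peaked order with peak `o₀` is `z`. -/
lemma eq_z_of_peak0 {q : LinearOrder (Fin n)}
    (h1 : ∀ o : Fin n, o ≠ a0 n hn → q.lt o (a0 n hn))
    (h2 : ∀ o o' : Fin n, o ≠ a0 n hn → o' ≠ a0 n hn → o ≠ o' →
      ((o < o' ∧ o' < a0 n hn) ∨ (a0 n hn < o' ∧ o' < o)) → q.lt o o') :
    q = z n := by
  have hlt : ∀ x y : Fin n, y.val < x.val → q.lt x y := by
    intro x y hxy
    by_cases hy0 : y = a0 n hn
    · subst hy0
      apply h1
      intro h; rw [h] at hxy; simp at hxy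
    · apply h2 x y ?_ hy0 ?_ (Or.inr ⟨?_, ?_⟩)
      · intro h; rw [h] at hxy; simp at hxy
      · intro h; rw [h] at hxy; omega
      · rw [Fin.lt_def]; simp
        have : y.val ≠ 0 := fun h => hy0 (Fin.ext (by simpa using h))
        omega
      · rw [Fin.lt_def]; exact hxy
  have hle : ∀ x y : Fin n, q.le x y ↔ (z n).le x y := by
    intro x y
    rw [z_le]
    constructor
    · intro h
      by_contra hc
      push_neg at hc
      exact absurd h (((q.lt_iff_le_not_ge y x).mp (hlt y x hc)).2)
    · intro h
      rcases Nat.lt_or_ge y.val x.val with h1' | h1'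
      · exact lo_le_of_lt q (hlt x y h1')
      · have : x = y := Fin.ext (by omega)
        subst this; exact lo_le_refl q x
  exact LinearOrder.ext hle

/-- a single-peaked preference other than `z` prefers `o₁` to `o₀`. -/
lemma q_cases {q : LinearOrder (Fin n)} (hq : SinglePeaked q) :
    q = z n ∨ q.lt (a0 n hn) (a1 n hn) := by
  obtain ⟨pk, h1, h2⟩ := hq
  by_cases hpk0 : pk = a0 n hn
  · subst hpk0
    exact Or.inl (eq_z_of_peak0 n hn h1 h2)
  · right
    have h0 : a0 n hn ≠ pk := fun h => hpk0 h.symm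
    by_cases hpk1 : pk = a1 n hn
    · subst hpk1; exact h1 _ h0
    · have h1' : a1 n hn ≠ pk := fun h => hpk1 h.symm
      have hpkv0 : pk.val ≠ 0 := fun h => hpk0 (Fin.ext (by simpa using h))
      have hpkv1 : pk.val ≠ 1 := fun h => hpk1 (Fin.ext (by simpa using h))
      apply h2 _ _ h0 h1' (by simp [Fin.ext_iff, a0, a1]) (Or.inl ⟨?_, ?_⟩)
      · rw [Fin.lt_def]; simp [a0, a1]
      · rw [Fin.lt_def]; simp [a1]; omega

/-- peak of a single-peaked preference distinct from `z` is not `o₀`;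
moreover the favourite within `{o₀,o₁,o₃}` is `o₁` or `o₃`. -/
def S2 : Finset (Fin n) := {a0 n hn, a1 n hn, a3 n hn}

lemma mem_S2 {j : Fin n} :
    j ∈ S2 n hn ↔ j.val = 0 ∨ j.val = 1 ∨ j.val = 3 := by
  simp [S2, Fin.ext_iff, a0, a1, a3]

lemma S2_card : (S2 n hn).card = 3 := by
  rw [S2]
  rw [Finset.card_insert_of_notMem, Finset.card_insert_of_notMem,
    Finset.card_singleton]
  · simp [Fin.ext_iff, a1, a3]
  · simp [Fin.ext_iff, a0, a1, a3]

lemma favIn_w_S2 (d : Fin n) : favIn (w n) (S2 n hn) d = a3 n hn := by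
  rw [w]
  apply favIn_ofUtil d ((mem_S2 n hn).mpr (by simp))
  intro y hy
  rw [mem_S2] at hy
  simp only [uw]
  rcases hy with h | h | h <;> rw [h] <;> norm_num

lemma favIn_z_S2 (d : Fin n) : favIn (z n) (S2 n hn) d = a0 n hn := by
  rw [z, ek]
  apply favIn_ofUtil d ((mem_S2 n hn).mpr (by simp))
  intro y hy
  have := y.isLt
  simp only [ue, a0_val, le_refl, ↓reduceIte]
  split_ifs <;> omega

lemma favIn_q_S2_top3 {q : LinearOrder (Fin n)} (h01 : q.lt (a0 n hn) (a1 n hn))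
    (h13 : q.lt (a1 n hn) (a3 n hn)) (d : Fin n) :
    favIn q (S2 n hn) d = a3 n hn := by
  apply favIn_eq_of q d ((mem_S2 n hn).mpr (by simp))
  intro y hy
  rw [mem_S2] at hy
  have key : y = a0 n hn ∨ y = a1 n hn ∨ y = a3 n hn := by
    rcases hy with h | h | h
    · exact Or.inl (Fin.ext (by simpa using h))
    · exact Or.inr (Or.inl (Fin.ext (by simpa using h)))
    · exact Or.inr (Or.inr (Fin.ext (by simpa using h)))
  rcases key with rfl | rfl | rfl
  · exact lo_le_of_lt q (lo_lt_trans q h01 h13)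
  · exact lo_le_of_lt q h13
  · exact lo_le_refl q _

lemma favIn_q_S2_top1 {q : LinearOrder (Fin n)} (h01 : q.lt (a0 n hn) (a1 n hn))
    (h31 : q.le (a3 n hn) (a1 n hn)) (d : Fin n) :
    favIn q (S2 n hn) d = a1 n hn := by
  apply favIn_eq_of q d ((mem_S2 n hn).mpr (by simp))
  intro y hy
  rw [mem_S2] at hy
  have key : y = a0 n hn ∨ y = a1 n hn ∨ y = a3 n hn := by
    rcases hy with h | h | h
    · exact Or.inl (Fin.ext (by simpa using h))
    · exact Or.inr (Or.inl (Fin.ext (by simpa using h)))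
    · exact Or.inr (Or.inr (Fin.ext (by simpa using h)))
  rcases key with rfl | rfl | rfl
  · exact lo_le_of_lt q h01
  · exact lo_le_refl q _
  · exact h31

lemma favIn_w_univ (d : Fin n) : favIn (w n) Finset.univ d = a2 n hn := by
  rw [w]
  apply favIn_ofUtil d (Finset.mem_univ _)
  intro y _
  have := y.isLt
  simp only [uw, a2_val]
  split_ifs <;> omega

lemma favIn_ek_univ (k : ℕ) (hk : k < n) (d : Fin n) :
    favIn (ek n k) Finset.univ d = ⟨k, hk⟩ := by
  rw [ek]
  apply favIn_ofUtil d (Finset.mem_univ _)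
  intro y _
  have := y.isLt
  simp only [ue, Fin.val_mk]
  split_ifs <;> omega

lemma favIn_z_univ (d : Fin n) : favIn (z n) Finset.univ d = a0 n hn := by
  have := favIn_ek_univ n 0 (by omega) d
  rw [z, this]
  apply Fin.ext; simp [a0]


/-! ### explicit computations of TTC on the special slices -/

lemma iterate_two {β : Type*} (f : β → β) (x : β) : f^[2] x = f (f x) := by
  rw [Function.iterate_succ_apply', Function.iterate_one]

lemma iterate_three {β : Type*} (f : β → β) (x : β) : f^[3] x = f (f (f x)) := by
  rw [Function.iterate_succ_apply', iterate_two]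

lemma univ_sdiff_sdiff (T : Finset (Fin n)) :
    Finset.univ \ (Finset.univ \ T) = T := by
  ext j; simp

include hn in
lemma F1_fix (R : Fin n → LinearOrder (Fin n))
    (hR : ∀ j : Fin n, j.val ≠ 0 → j.val ≠ 1 → j.val ≠ 3 → R j = Pstar n j) :
    ∀ j : Fin n, j.val ≠ 0 → j.val ≠ 1 → j.val ≠ 3 →
      favIn (R j) Finset.univ j = j := by
  intro j h0 h1 h3
  rw [hR j h0 h1 h3, Pstar]
  by_cases h2 : j.val = 2
  · rw [if_pos (Or.inr h2), favIn_w_univ n hn]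
    exact Fin.ext (by simp [a2, h2])
  · rw [if_neg (by omega), if_neg (by omega), favIn_ek_univ n j.val j.isLt]

lemma card_univ_fin : (Finset.univ : Finset (Fin n)).card = n := by
  simp

/-- Stage 1 for profiles which are `Pstar` off `{0,1,3}` and whose pointing
on `{0,1,3}` can be ρ-graded into the complement: cyclic agents are the
complement of `{o₀,o₁,o₃}`. -/
lemma cyc1_eq (R : Fin n → LinearOrder (Fin n))
    (hR : ∀ j : Fin n, j.val ≠ 0 → j.val ≠ 1 → j.val ≠ 3 → R j = Pstar n j)
    (ρ : Fin n → ℕ)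
    (hstep : ∀ j ∈ S2 n hn,
        (favIn (R j) Finset.univ j ∉ S2 n hn ∨
         (favIn (R j) Finset.univ j ∈ S2 n hn ∧ ρ (favIn (R j) Finset.univ j) < ρ j))) :
    cyclicAgents (fun i S => favIn (R i) S i) Finset.univ
      = Finset.univ \ S2 n hn := by
  have hfix : ∀ j : Fin n, j ∉ S2 n hn → favIn (R j) Finset.univ j = j := by
    intro j hj; rw [mem_S2] at hj; push_neg at hj
    exact F1_fix n hn R hR j hj.1 hj.2.1 hj.2.2
  refine cyclicAgents_eq Finset.sdiff_subset ?_ ρ ?_ ?_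
  · intro i hi
    have hiS2 : i ∉ S2 n hn := (Finset.mem_sdiff.mp hi).2
    refine ⟨0, by rw [card_univ_fin]; omega, ?_⟩
    simpa using hfix i hiS2
  · intro j _ hjC
    have hjS2 : j ∈ S2 n hn := by
      by_contra h
      exact hjC (Finset.mem_sdiff.mpr ⟨Finset.mem_univ j, h⟩)
    rcases hstep j hjS2 with h | ⟨h1, h2⟩
    · exact Or.inl (Finset.mem_sdiff.mpr ⟨Finset.mem_univ _, h⟩)
    · exact Or.inr ⟨Finset.mem_univ _, fun hc => (Finset.mem_sdiff.mp hc).2 h1, h2⟩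
  · intro j hj
    have hjS2 : j ∉ S2 n hn := (Finset.mem_sdiff.mp hj).2
    rw [hfix j hjS2]
    exact hj

lemma a2_not_S2 : a2 n hn ∉ S2 n hn := by rw [mem_S2]; simp
lemma a0_S2 : a0 n hn ∈ S2 n hn := by rw [mem_S2]; simp
lemma a1_S2 : a1 n hn ∈ S2 n hn := by rw [mem_S2]; simp
lemma a3_S2 : a3 n hn ∈ S2 n hn := by rw [mem_S2]; simp

lemma mem_S2_cases {j : Fin n} (h : j ∈ S2 n hn) :
    j = a0 n hn ∨ j = a1 n hn ∨ j = a3 n hn := by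
  rw [mem_S2] at h
  rcases h with h | h | h
  · exact Or.inl (Fin.ext (by simpa using h))
  · exact Or.inr (Or.inl (Fin.ext (by simpa using h)))
  · exact Or.inr (Or.inr (Fin.ext (by simpa using h)))

/-- full computation of TTC at `P⋆`. -/
lemma TTC_Pstar : ∀ i : Fin n, TTC (Pstar n) i =
    if i.val = 0 then a3 n hn else if i.val = 3 then a0 n hn else i := by
  intro i
  set fv : Fin n → Finset (Fin n) → Fin n := fun j S => favIn (Pstar n j) S j with hfv
  have hFa0 : favIn (Pstar n (a0 n hn)) Finset.univ (a0 n hn) = a2 n hn := by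
    rw [Pstar_a0 n hn, favIn_w_univ n hn]
  have hFa1 : favIn (Pstar n (a1 n hn)) Finset.univ (a1 n hn) = a0 n hn := by
    rw [Pstar_a1 n hn, favIn_z_univ n hn]
  have hFa3 : favIn (Pstar n (a3 n hn)) Finset.univ (a3 n hn) = a0 n hn := by
    rw [Pstar_a3 n hn, favIn_z_univ n hn]
  have hcyc1 : cyclicAgents fv Finset.univ = Finset.univ \ S2 n hn := by
    apply cyc1_eq n hn _ (fun _ _ _ _ => rfl) (fun j => j.val)
    intro j hj
    rcases mem_S2_cases n hn hj with rfl | rfl | rfl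
    · rw [hFa0]; exact Or.inl (a2_not_S2 n hn)
    · rw [hFa1]; exact Or.inr ⟨a0_S2 n hn, by simp⟩
    · rw [hFa3]; exact Or.inr ⟨a0_S2 n hn, by simp⟩
  have hC1ne : (Finset.univ \ S2 n hn).Nonempty :=
    ⟨a2 n hn, Finset.mem_sdiff.mpr ⟨Finset.mem_univ _, a2_not_S2 n hn⟩⟩
  by_cases hiS2 : i ∈ S2 n hn
  · -- stage 2 on S2
    have h1 : TTCaux fv Finset.univ i = TTCaux fv (S2 n hn) i := by
      rw [TTCaux_not_cyclic (by rw [hcyc1]; exact hC1ne)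
        (by rw [hcyc1]; simp [hiS2]), hcyc1, univ_sdiff_sdiff]
    -- pointing on S2
    have hGa0 : favIn (Pstar n (a0 n hn)) (S2 n hn) (a0 n hn) = a3 n hn := by
      rw [Pstar_a0 n hn, favIn_w_S2 n hn]
    have hGa1 : favIn (Pstar n (a1 n hn)) (S2 n hn) (a1 n hn) = a0 n hn := by
      rw [Pstar_a1 n hn, favIn_z_S2 n hn]
    have hGa3 : favIn (Pstar n (a3 n hn)) (S2 n hn) (a3 n hn) = a0 n hn := by
      rw [Pstar_a3 n hn, favIn_z_S2 n hn]
    have hcyc2 : cyclicAgents fv (S2 n hn) = {a0 n hn, a3 n hn} := by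
      refine cyclicAgents_eq ?_ ?_ (fun _ => 0) ?_ ?_
      · intro x hx
        simp only [Finset.mem_insert, Finset.mem_singleton] at hx
        rcases hx with rfl | rfl
        · exact a0_S2 n hn
        · exact a3_S2 n hn
      · intro x hx
        simp only [Finset.mem_insert, Finset.mem_singleton] at hx
        rcases hx with rfl | rfl
        · refine ⟨1, by rw [S2_card]; omega, ?_⟩
          rw [iterate_two]
          show fv (fv (a0 n hn) (S2 n hn)) (S2 n hn) = a0 n hn
          rw [show fv (a0 n hn) (S2 n hn) = a3 n hn from hGa0]
          exact hGa3
        · refine ⟨1, by rw [S2_card]; omega, ?_⟩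
          rw [iterate_two]
          show fv (fv (a3 n hn) (S2 n hn)) (S2 n hn) = a3 n hn
          rw [show fv (a3 n hn) (S2 n hn) = a0 n hn from hGa3]
          exact hGa0
      · intro j hj hjC
        rcases mem_S2_cases n hn hj with rfl | rfl | rfl
        · exact absurd (by simp : a0 n hn ∈ ({a0 n hn, a3 n hn} : Finset (Fin n))) hjC
        · left
          show favIn (Pstar n (a1 n hn)) (S2 n hn) (a1 n hn) ∈ _
          rw [hGa1]; simp
        · exact absurd (by simp : a3 n hn ∈ ({a0 n hn, a3 n hn} : Finset (Fin n))) hjC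
      · intro j hj
        simp only [Finset.mem_insert, Finset.mem_singleton] at hj
        rcases hj with rfl | rfl
        · show favIn (Pstar n (a0 n hn)) (S2 n hn) (a0 n hn) ∈ _
          rw [hGa0]; simp
        · show favIn (Pstar n (a3 n hn)) (S2 n hn) (a3 n hn) ∈ _
          rw [hGa3]; simp
    have hC2ne : ({a0 n hn, a3 n hn} : Finset (Fin n)).Nonempty := ⟨a0 n hn, by simp⟩
    rcases mem_S2_cases n hn hiS2 with rfl | rfl | rfl
    · rw [TTC]
      show TTCaux fv Finset.univ (a0 n hn) = _
      rw [h1, TTCaux_cyclic (by rw [hcyc2]; simp), show fv (a0 n hn) (S2 n hn) = a3 n hn from hGa0]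
      simp
    · -- a1 : stage 3
      rw [TTC]
      show TTCaux fv Finset.univ (a1 n hn) = _
      have ha1notC2 : a1 n hn ∉ ({a0 n hn, a3 n hn} : Finset (Fin n)) := by
        simp [Fin.ext_iff, a0, a1, a3]
      have h2 : TTCaux fv (S2 n hn) (a1 n hn) = TTCaux fv (S2 n hn \ {a0 n hn, a3 n hn}) (a1 n hn) := by
        rw [TTCaux_not_cyclic (by rw [hcyc2]; exact hC2ne) (by rw [hcyc2]; exact ha1notC2), hcyc2]
      have hset : S2 n hn \ {a0 n hn, a3 n hn} = {a1 n hn} := by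
        ext j
        simp only [Finset.mem_sdiff, mem_S2, Finset.mem_insert, Finset.mem_singleton, Fin.ext_iff]
        simp [a0, a1, a3]
        omega
      have hGa1' : favIn (Pstar n (a1 n hn)) ({a1 n hn} : Finset (Fin n)) (a1 n hn) = a1 n hn :=
        favIn_singleton n _ _ _
      have hcyc3 : cyclicAgents fv ({a1 n hn} : Finset (Fin n)) = {a1 n hn} := by
        refine cyclicAgents_eq (Finset.Subset.refl _) ?_ (fun _ => 0) ?_ ?_
        · intro x hx
          rw [Finset.mem_singleton] at hx
          subst hx
          refine ⟨0, by simp, ?_⟩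
          simp only [zero_add, Function.iterate_one]; exact hGa1'
        · intro j hj hjC; exact absurd hj hjC
        · intro j hj
          rw [Finset.mem_singleton] at hj
          subst hj
          show favIn (Pstar n (a1 n hn)) _ _ ∈ _
          rw [hGa1']; simp
      rw [h1, h2, hset, TTCaux_cyclic (by rw [hcyc3]; simp), show fv (a1 n hn) ({a1 n hn} : Finset (Fin n)) = a1 n hn from hGa1']
      simp [a1]
    · rw [TTC]
      show TTCaux fv Finset.univ (a3 n hn) = _
      rw [h1, TTCaux_cyclic (by rw [hcyc2]; simp), show fv (a3 n hn) (S2 n hn) = a0 n hn from hGa3]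
      simp [a3]
  · -- i is a stage-1 fixed point
    rw [TTC]
    show TTCaux fv Finset.univ i = _
    have hiC1 : i ∈ cyclicAgents fv Finset.univ := by
      rw [hcyc1]; exact Finset.mem_sdiff.mpr ⟨Finset.mem_univ _, hiS2⟩
    rw [TTCaux_cyclic hiC1]
    have hvals : i.val ≠ 0 ∧ i.val ≠ 1 ∧ i.val ≠ 3 := by
      rw [mem_S2] at hiS2; push_neg at hiS2; exact hiS2
    rw [show fv i Finset.univ = favIn (Pstar n i) Finset.univ i from rfl,
      F1_fix n hn (Pstar n) (fun _ _ _ _ => rfl) i hvals.1 hvals.2.1 hvals.2.2]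
    rw [if_neg hvals.1, if_neg hvals.2.2]


/-! distinctness facts -/

lemma a0_ne_a3 : a0 n hn ≠ a3 n hn := by simp [Fin.ext_iff, a0, a3]
lemma a1_ne_a3 : a1 n hn ≠ a3 n hn := by simp [Fin.ext_iff, a1, a3]
lemma a2_ne_a3 : a2 n hn ≠ a3 n hn := by simp [Fin.ext_iff, a2, a3]
lemma a0_ne_a1 : a0 n hn ≠ a1 n hn := by simp [Fin.ext_iff, a0, a1]
lemma a2_ne_a1 : a2 n hn ≠ a1 n hn := by simp [Fin.ext_iff, a2, a1]
lemma a3_ne_a1 : a3 n hn ≠ a1 n hn := by simp [Fin.ext_iff, a3, a1]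
lemma a0_ne_a2 : a0 n hn ≠ a2 n hn := by simp [Fin.ext_iff, a0, a2]

/-- the peak of a single-peaked preference `≠ z` is not `o₀`. -/
lemma peak_ne_a0 {q : LinearOrder (Fin n)} {pk : Fin n}
    (h1 : ∀ o : Fin n, o ≠ pk → q.lt o pk)
    (h2 : ∀ o o' : Fin n, o ≠ pk → o' ≠ pk → o ≠ o' →
      ((o < o' ∧ o' < pk) ∨ (pk < o' ∧ o' < o)) → q.lt o o')
    (hqz : q ≠ z n) : pk ≠ a0 n hn := by
  intro h
  subst h
  exact hqz (eq_z_of_peak0 n hn h1 h2)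

section Slice3

variable (q : LinearOrder (Fin n))

/-- the slice profile where agent 3 reports `q`. -/
def R3 : Fin n → LinearOrder (Fin n) := Function.update (Pstar n) (a3 n hn) q

lemma R3_a0 : R3 n hn q (a0 n hn) = w n := by
  rw [R3, Function.update_of_ne (a0_ne_a3 n hn), Pstar_a0 n hn]
lemma R3_a1 : R3 n hn q (a1 n hn) = z n := by
  rw [R3, Function.update_of_ne (a1_ne_a3 n hn), Pstar_a1 n hn]
lemma R3_a3 : R3 n hn q (a3 n hn) = q := by
  rw [R3, Function.update_self]
lemma R3_off : ∀ j : Fin n, j.val ≠ 0 → j.val ≠ 1 → j.val ≠ 3 →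
    R3 n hn q j = Pstar n j := by
  intro j _ _ h3
  rw [R3, Function.update_of_ne (fun h => h3 (by rw [h]; rfl))]

/-- computation of agent 3's TTC assignment on the slice where the others
report as in `P⋆` — case where `q` prefers `o₃` to `o₁`. -/
lemma TTC_slice3_hi (hq : SinglePeaked q) (hqz : q ≠ z n)
    (h13 : q.lt (a1 n hn) (a3 n hn)) :
    TTC (R3 n hn q) (a3 n hn) = a3 n hn := by
  obtain ⟨pk, hpk1, hpk2⟩ := hq
  have hpk0 : pk ≠ a0 n hn := peak_ne_a0 n hn hpk1 hpk2 hqz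
  have h01 : q.lt (a0 n hn) (a1 n hn) := by
    rcases q_cases n hn ⟨pk, hpk1, hpk2⟩ with h | h
    · exact absurd h hqz
    · exact h
  set fv : Fin n → Finset (Fin n) → Fin n := fun j S => favIn (R3 n hn q j) S j with hfv
  have hFa0 : favIn (R3 n hn q (a0 n hn)) Finset.univ (a0 n hn) = a2 n hn := by
    rw [R3_a0 n hn]; exact favIn_w_univ n hn _
  have hFa1 : favIn (R3 n hn q (a1 n hn)) Finset.univ (a1 n hn) = a0 n hn := by
    rw [R3_a1 n hn]; exact favIn_z_univ n hn _
  have hFa3 : favIn (R3 n hn q (a3 n hn)) Finset.univ (a3 n hn) = pk := by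
    rw [R3_a3 n hn]; exact favIn_univ_eq_peak n hpk1 _
  have hFfix : ∀ j : Fin n, j.val ≠ 0 → j.val ≠ 1 → j.val ≠ 3 →
      favIn (R3 n hn q j) Finset.univ j = j := by
    intro j h0 h1 h3
    rw [R3_off n hn q j h0 h1 h3]
    exact F1_fix n hn (Pstar n) (fun _ _ _ _ => rfl) j h0 h1 h3
  by_cases hpk3 : pk = a3 n hn
  · -- agent 3 keeps at stage 1
    have hcyc1 : cyclicAgents fv Finset.univ
        = Finset.univ \ {a0 n hn, a1 n hn} := by
      refine cyclicAgents_eq Finset.sdiff_subset ?_ (fun j => j.val) ?_ ?_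
      · intro i hi
        simp only [Finset.mem_sdiff, Finset.mem_univ, true_and, Finset.mem_insert,
          Finset.mem_singleton] at hi
        push_neg at hi
        have hfix1 : favIn (R3 n hn q i) Finset.univ i = i := by
          by_cases hi3 : i = a3 n hn
          · subst hi3; rw [hFa3, hpk3]
          · exact hFfix i (fun h => hi.1 (Fin.ext (by simpa using h)))
              (fun h => hi.2 (Fin.ext (by simpa using h)))
              (fun h => hi3 (Fin.ext (by simpa using h)))
        exact ⟨0, by rw [card_univ_fin]; omega, by simpa using hfix1⟩
      · intro j _ hjC
        have hj' : j = a0 n hn ∨ j = a1 n hn := by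
          by_contra hcon
          push_neg at hcon
          apply hjC
          simp only [Finset.mem_sdiff, Finset.mem_univ, true_and, Finset.mem_insert,
            Finset.mem_singleton]
          push_neg
          exact hcon
        rcases hj' with rfl | rfl
        · left
          show favIn (R3 n hn q (a0 n hn)) Finset.univ (a0 n hn) ∈ _
          rw [hFa0]
          simp only [Finset.mem_sdiff, Finset.mem_univ, true_and, Finset.mem_insert,
            Finset.mem_singleton]
          push_neg
          exact ⟨Ne.symm (a0_ne_a2 n hn), a2_ne_a1 n hn⟩
        · right
          refine ⟨Finset.mem_univ _, ?_, ?_⟩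
          · show favIn (R3 n hn q (a1 n hn)) Finset.univ (a1 n hn) ∉ _
            rw [hFa1]
            simp only [Finset.mem_sdiff, Finset.mem_univ, true_and, Finset.mem_insert,
              Finset.mem_singleton, not_not]
            simp
          · show ((favIn (R3 n hn q (a1 n hn)) Finset.univ (a1 n hn)) : Fin n).val < _
            rw [hFa1]
            simp
      · intro j hj
        have hjm := (Finset.mem_sdiff.mp hj).2
        simp only [Finset.mem_insert, Finset.mem_singleton] at hjm
        push_neg at hjm
        show favIn (R3 n hn q j) Finset.univ j ∈ _
        by_cases hj3 : j = a3 n hn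
        · subst hj3
          rw [hFa3, hpk3]
          exact hj
        · rw [hFfix j (fun h => hjm.1 (Fin.ext (by simpa using h)))
            (fun h => hjm.2 (Fin.ext (by simpa using h)))
            (fun h => hj3 (Fin.ext (by simpa using h)))]
          exact hj
    have h3C : a3 n hn ∈ cyclicAgents fv Finset.univ := by
      rw [hcyc1]
      simp only [Finset.mem_sdiff, Finset.mem_univ, true_and, Finset.mem_insert,
        Finset.mem_singleton]
      push_neg
      exact ⟨Ne.symm (a0_ne_a3 n hn), Ne.symm (a1_ne_a3 n hn)⟩
    rw [TTC]
    show TTCaux fv Finset.univ (a3 n hn) = _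
    rw [TTCaux_cyclic h3C]
    show favIn (R3 n hn q (a3 n hn)) Finset.univ (a3 n hn) = _
    rw [hFa3, hpk3]
  · -- stage 2
    have hcyc1 : cyclicAgents fv Finset.univ = Finset.univ \ S2 n hn := by
      apply cyc1_eq n hn _ (R3_off n hn q) (fun j => j.val)
      intro j hj
      rcases mem_S2_cases n hn hj with rfl | rfl | rfl
      · rw [hFa0]; exact Or.inl (a2_not_S2 n hn)
      · rw [hFa1]; exact Or.inr ⟨a0_S2 n hn, by simp⟩
      · rw [hFa3]
        by_cases hpkS2 : pk ∈ S2 n hn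
        · rcases mem_S2_cases n hn hpkS2 with h | h | h
          · exact absurd h hpk0
          · subst h; exact Or.inr ⟨hpkS2, by simp⟩
          · exact absurd h hpk3
        · exact Or.inl hpkS2
    have hC1ne : (Finset.univ \ S2 n hn).Nonempty :=
      ⟨a2 n hn, Finset.mem_sdiff.mpr ⟨Finset.mem_univ _, a2_not_S2 n hn⟩⟩
    have h1 : TTCaux fv Finset.univ (a3 n hn) = TTCaux fv (S2 n hn) (a3 n hn) := by
      rw [TTCaux_not_cyclic (by rw [hcyc1]; exact hC1ne)
        (by rw [hcyc1]; simp [a3_S2 n hn]), hcyc1, univ_sdiff_sdiff]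
    have hGa3 : favIn (R3 n hn q (a3 n hn)) (S2 n hn) (a3 n hn) = a3 n hn := by
      rw [R3_a3 n hn]
      exact favIn_q_S2_top3 n hn h01 h13 _
    have hGa0 : favIn (R3 n hn q (a0 n hn)) (S2 n hn) (a0 n hn) = a3 n hn := by
      rw [R3_a0 n hn]; exact favIn_w_S2 n hn _
    have hGa1 : favIn (R3 n hn q (a1 n hn)) (S2 n hn) (a1 n hn) = a0 n hn := by
      rw [R3_a1 n hn]; exact favIn_z_S2 n hn _
    have hcyc2 : cyclicAgents fv (S2 n hn) = {a3 n hn} := by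
      refine cyclicAgents_eq ?_ ?_ (fun j => j.val) ?_ ?_
      · intro x hx
        rw [Finset.mem_singleton] at hx
        subst hx; exact a3_S2 n hn
      · intro x hx
        rw [Finset.mem_singleton] at hx
        subst hx
        exact ⟨0, by rw [S2_card]; omega, by simpa using hGa3⟩
      · intro j hj hjC
        rw [Finset.mem_singleton] at hjC
        rcases mem_S2_cases n hn hj with rfl | rfl | rfl
        · left
          show favIn (R3 n hn q (a0 n hn)) (S2 n hn) (a0 n hn) ∈ _
          rw [hGa0]; simp
        · right
          refine ⟨?_, ?_, ?_⟩
          · show favIn (R3 n hn q (a1 n hn)) (S2 n hn) (a1 n hn) ∈ _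
            rw [hGa1]; exact a0_S2 n hn
          · show favIn (R3 n hn q (a1 n hn)) (S2 n hn) (a1 n hn) ∉ _
            rw [hGa1, Finset.mem_singleton]; exact a0_ne_a3 n hn
          · show ((favIn (R3 n hn q (a1 n hn)) (S2 n hn) (a1 n hn)) : Fin n).val < _
            rw [hGa1]; simp
        · exact absurd rfl hjC
      · intro j hj
        rw [Finset.mem_singleton] at hj
        subst hj
        show favIn (R3 n hn q (a3 n hn)) (S2 n hn) (a3 n hn) ∈ _
        rw [hGa3]; simp
    rw [TTC]
    show TTCaux fv Finset.univ (a3 n hn) = _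
    rw [h1, TTCaux_cyclic (by rw [hcyc2]; simp)]
    exact hGa3

/-- slice-3 computation — case where `q` prefers `o₁` to `o₃`. -/
lemma TTC_slice3_lo (hq : SinglePeaked q) (hqz : q ≠ z n)
    (h31 : q.le (a3 n hn) (a1 n hn)) :
    TTC (R3 n hn q) (a3 n hn) = a1 n hn := by
  obtain ⟨pk, hpk1, hpk2⟩ := hq
  have hpk0 : pk ≠ a0 n hn := peak_ne_a0 n hn hpk1 hpk2 hqz
  have h01 : q.lt (a0 n hn) (a1 n hn) := by
    rcases q_cases n hn ⟨pk, hpk1, hpk2⟩ with h | h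
    · exact absurd h hqz
    · exact h
  have hpk3 : pk ≠ a3 n hn := by
    intro h
    subst h
    exact lo_not_lt_of_le q h31 (hpk1 _ (a1_ne_a3 n hn))
  set fv : Fin n → Finset (Fin n) → Fin n := fun j S => favIn (R3 n hn q j) S j with hfv
  have hFa0 : favIn (R3 n hn q (a0 n hn)) Finset.univ (a0 n hn) = a2 n hn := by
    rw [R3_a0 n hn]; exact favIn_w_univ n hn _
  have hFa1 : favIn (R3 n hn q (a1 n hn)) Finset.univ (a1 n hn) = a0 n hn := by
    rw [R3_a1 n hn]; exact favIn_z_univ n hn _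
  have hFa3 : favIn (R3 n hn q (a3 n hn)) Finset.univ (a3 n hn) = pk := by
    rw [R3_a3 n hn]; exact favIn_univ_eq_peak n hpk1 _
  have hcyc1 : cyclicAgents fv Finset.univ = Finset.univ \ S2 n hn := by
    apply cyc1_eq n hn _ (R3_off n hn q) (fun j => j.val)
    intro j hj
    rcases mem_S2_cases n hn hj with rfl | rfl | rfl
    · rw [hFa0]; exact Or.inl (a2_not_S2 n hn)
    · rw [hFa1]; exact Or.inr ⟨a0_S2 n hn, by simp⟩
    · rw [hFa3]
      by_cases hpkS2 : pk ∈ S2 n hn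
      · rcases mem_S2_cases n hn hpkS2 with h | h | h
        · exact absurd h hpk0
        · subst h; exact Or.inr ⟨hpkS2, by simp⟩
        · exact absurd h hpk3
      · exact Or.inl hpkS2
  have hC1ne : (Finset.univ \ S2 n hn).Nonempty :=
    ⟨a2 n hn, Finset.mem_sdiff.mpr ⟨Finset.mem_univ _, a2_not_S2 n hn⟩⟩
  have h1 : TTCaux fv Finset.univ (a3 n hn) = TTCaux fv (S2 n hn) (a3 n hn) := by
    rw [TTCaux_not_cyclic (by rw [hcyc1]; exact hC1ne)
      (by rw [hcyc1]; simp [a3_S2 n hn]), hcyc1, univ_sdiff_sdiff]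
  have hGa3 : favIn (R3 n hn q (a3 n hn)) (S2 n hn) (a3 n hn) = a1 n hn := by
    rw [R3_a3 n hn]
    exact favIn_q_S2_top1 n hn h01 h31 _
  have hGa0 : favIn (R3 n hn q (a0 n hn)) (S2 n hn) (a0 n hn) = a3 n hn := by
    rw [R3_a0 n hn]; exact favIn_w_S2 n hn _
  have hGa1 : favIn (R3 n hn q (a1 n hn)) (S2 n hn) (a1 n hn) = a0 n hn := by
    rw [R3_a1 n hn]; exact favIn_z_S2 n hn _
  -- three-cycle: all of S2 is cyclic at stage 2
  have hiter : ∀ x ∈ S2 n hn, (fun j => fv j (S2 n hn))^[3] x = x := by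
    intro x hx
    rw [iterate_three]
    rcases mem_S2_cases n hn hx with rfl | rfl | rfl
    · show fv (fv (fv (a0 n hn) (S2 n hn)) (S2 n hn)) (S2 n hn) = _
      rw [show fv (a0 n hn) (S2 n hn) = a3 n hn from hGa0,
        show fv (a3 n hn) (S2 n hn) = a1 n hn from hGa3]
      exact hGa1
    · show fv (fv (fv (a1 n hn) (S2 n hn)) (S2 n hn)) (S2 n hn) = _
      rw [show fv (a1 n hn) (S2 n hn) = a0 n hn from hGa1,
        show fv (a0 n hn) (S2 n hn) = a3 n hn from hGa0]
      exact hGa3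
    · show fv (fv (fv (a3 n hn) (S2 n hn)) (S2 n hn)) (S2 n hn) = _
      rw [show fv (a3 n hn) (S2 n hn) = a1 n hn from hGa3,
        show fv (a1 n hn) (S2 n hn) = a0 n hn from hGa1]
      exact hGa0
  have hcyc2 : cyclicAgents fv (S2 n hn) = S2 n hn := by
    refine cyclicAgents_eq (Finset.Subset.refl _) ?_ (fun _ => 0) ?_ ?_
    · intro x hx
      exact ⟨2, by rw [S2_card]; omega, hiter x hx⟩
    · intro j hj hjC
      exact absurd hj hjC
    · intro j hj
      rcases mem_S2_cases n hn hj with rfl | rfl | rfl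
      · show favIn (R3 n hn q (a0 n hn)) (S2 n hn) (a0 n hn) ∈ _
        rw [hGa0]; exact a3_S2 n hn
      · show favIn (R3 n hn q (a1 n hn)) (S2 n hn) (a1 n hn) ∈ _
        rw [hGa1]; exact a0_S2 n hn
      · show favIn (R3 n hn q (a3 n hn)) (S2 n hn) (a3 n hn) ∈ _
        rw [hGa3]; exact a1_S2 n hn
  rw [TTC]
  show TTCaux fv Finset.univ (a3 n hn) = _
  rw [h1, TTCaux_cyclic (by rw [hcyc2]; exact a3_S2 n hn)]
  exact hGa3

end Slice3



section Slice1

variable (q : LinearOrder (Fin n))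

/-- the slice profile where agent 1 reports `q`. -/
def R1 : Fin n → LinearOrder (Fin n) := Function.update (Pstar n) (a1 n hn) q

lemma R1_a0 : R1 n hn q (a0 n hn) = w n := by
  rw [R1, Function.update_of_ne (a0_ne_a1 n hn), Pstar_a0 n hn]
lemma R1_a3 : R1 n hn q (a3 n hn) = z n := by
  rw [R1, Function.update_of_ne (a3_ne_a1 n hn), Pstar_a3 n hn]
lemma R1_a1 : R1 n hn q (a1 n hn) = q := by
  rw [R1, Function.update_self]
lemma R1_off : ∀ j : Fin n, j.val ≠ 0 → j.val ≠ 1 → j.val ≠ 3 →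
    R1 n hn q j = Pstar n j := by
  intro j _ h1 _
  rw [R1, Function.update_of_ne (fun h => h1 (by rw [h]; rfl))]

/-- on the slice where the others report as in `P⋆` (with agent 3 truthful
at `z`), agent 1 receives his own endowment whatever he reports (`≠ z`). -/
lemma TTC_slice1 (hq : SinglePeaked q) (hqz : q ≠ z n) :
    TTC (R1 n hn q) (a1 n hn) = a1 n hn := by
  obtain ⟨pk, hpk1, hpk2⟩ := hq
  have hpk0 : pk ≠ a0 n hn := peak_ne_a0 n hn hpk1 hpk2 hqz
  have h01 : q.lt (a0 n hn) (a1 n hn) := by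
    rcases q_cases n hn ⟨pk, hpk1, hpk2⟩ with h | h
    · exact absurd h hqz
    · exact h
  set fv : Fin n → Finset (Fin n) → Fin n := fun j S => favIn (R1 n hn q j) S j with hfv
  have hFa0 : favIn (R1 n hn q (a0 n hn)) Finset.univ (a0 n hn) = a2 n hn := by
    rw [R1_a0 n hn]; exact favIn_w_univ n hn _
  have hFa3 : favIn (R1 n hn q (a3 n hn)) Finset.univ (a3 n hn) = a0 n hn := by
    rw [R1_a3 n hn]; exact favIn_z_univ n hn _
  have hFa1 : favIn (R1 n hn q (a1 n hn)) Finset.univ (a1 n hn) = pk := by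
    rw [R1_a1 n hn]; exact favIn_univ_eq_peak n hpk1 _
  have hFfix : ∀ j : Fin n, j.val ≠ 0 → j.val ≠ 1 → j.val ≠ 3 →
      favIn (R1 n hn q j) Finset.univ j = j := by
    intro j h0 h1 h3
    rw [R1_off n hn q j h0 h1 h3]
    exact F1_fix n hn (Pstar n) (fun _ _ _ _ => rfl) j h0 h1 h3
  by_cases hpk1' : pk = a1 n hn
  · -- agent 1 keeps at stage 1
    have hcyc1 : cyclicAgents fv Finset.univ
        = Finset.univ \ {a0 n hn, a3 n hn} := by
      refine cyclicAgents_eq Finset.sdiff_subset ?_ (fun j => j.val) ?_ ?_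
      · intro i hi
        simp only [Finset.mem_sdiff, Finset.mem_univ, true_and, Finset.mem_insert,
          Finset.mem_singleton] at hi
        push_neg at hi
        have hfix1 : favIn (R1 n hn q i) Finset.univ i = i := by
          by_cases hi1 : i = a1 n hn
          · subst hi1; rw [hFa1, hpk1']
          · exact hFfix i (fun h => hi.1 (Fin.ext (by simpa using h)))
              (fun h => hi1 (Fin.ext (by simpa using h)))
              (fun h => hi.2 (Fin.ext (by simpa using h)))
        exact ⟨0, by rw [card_univ_fin]; omega, by simpa using hfix1⟩
      · intro j _ hjC
        have hj' : j = a0 n hn ∨ j = a3 n hn := by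
          by_contra hcon
          push_neg at hcon
          apply hjC
          simp only [Finset.mem_sdiff, Finset.mem_univ, true_and, Finset.mem_insert,
            Finset.mem_singleton]
          push_neg
          exact hcon
        rcases hj' with rfl | rfl
        · left
          show favIn (R1 n hn q (a0 n hn)) Finset.univ (a0 n hn) ∈ _
          rw [hFa0]
          simp only [Finset.mem_sdiff, Finset.mem_univ, true_and, Finset.mem_insert,
            Finset.mem_singleton]
          push_neg
          exact ⟨Ne.symm (a0_ne_a2 n hn), a2_ne_a3 n hn⟩
        · right
          refine ⟨Finset.mem_univ _, ?_, ?_⟩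
          · show favIn (R1 n hn q (a3 n hn)) Finset.univ (a3 n hn) ∉ _
            rw [hFa3]
            simp only [Finset.mem_sdiff, Finset.mem_univ, true_and, Finset.mem_insert,
              Finset.mem_singleton, not_not]
            simp
          · show ((favIn (R1 n hn q (a3 n hn)) Finset.univ (a3 n hn)) : Fin n).val < _
            rw [hFa3]
            simp
      · intro j hj
        have hjm := (Finset.mem_sdiff.mp hj).2
        simp only [Finset.mem_insert, Finset.mem_singleton] at hjm
        push_neg at hjm
        show favIn (R1 n hn q j) Finset.univ j ∈ _
        by_cases hj1 : j = a1 n hn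
        · subst hj1
          rw [hFa1, hpk1']
          exact hj
        · rw [hFfix j (fun h => hjm.1 (Fin.ext (by simpa using h)))
            (fun h => hj1 (Fin.ext (by simpa using h)))
            (fun h => hjm.2 (Fin.ext (by simpa using h)))]
          exact hj
    have h1C : a1 n hn ∈ cyclicAgents fv Finset.univ := by
      rw [hcyc1]
      simp only [Finset.mem_sdiff, Finset.mem_univ, true_and, Finset.mem_insert,
        Finset.mem_singleton]
      push_neg
      exact ⟨Ne.symm (a0_ne_a1 n hn), Ne.symm (a3_ne_a1 n hn)⟩
    rw [TTC]
    show TTCaux fv Finset.univ (a1 n hn) = _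
    rw [TTCaux_cyclic h1C]
    show favIn (R1 n hn q (a1 n hn)) Finset.univ (a1 n hn) = _
    rw [hFa1, hpk1']
  · -- stage ≥ 2
    have hcyc1 : cyclicAgents fv Finset.univ = Finset.univ \ S2 n hn := by
      apply cyc1_eq n hn _ (R1_off n hn q)
        (fun j => if j.val = 1 then 2 else if j.val = 3 then 1 else 0)
      intro j hj
      rcases mem_S2_cases n hn hj with rfl | rfl | rfl
      · rw [hFa0]; exact Or.inl (a2_not_S2 n hn)
      · rw [hFa1]
        by_cases hpkS2 : pk ∈ S2 n hn
        · rcases mem_S2_cases n hn hpkS2 with h | h | h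
          · exact absurd h hpk0
          · exact absurd h hpk1'
          · subst h; exact Or.inr ⟨hpkS2, by simp⟩
        · exact Or.inl hpkS2
      · rw [hFa3]; exact Or.inr ⟨a0_S2 n hn, by simp⟩
    have hC1ne : (Finset.univ \ S2 n hn).Nonempty :=
      ⟨a2 n hn, Finset.mem_sdiff.mpr ⟨Finset.mem_univ _, a2_not_S2 n hn⟩⟩
    have h1 : TTCaux fv Finset.univ (a1 n hn) = TTCaux fv (S2 n hn) (a1 n hn) := by
      rw [TTCaux_not_cyclic (by rw [hcyc1]; exact hC1ne)
        (by rw [hcyc1]; simp [a1_S2 n hn]), hcyc1, univ_sdiff_sdiff]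
    have hGa0 : favIn (R1 n hn q (a0 n hn)) (S2 n hn) (a0 n hn) = a3 n hn := by
      rw [R1_a0 n hn]; exact favIn_w_S2 n hn _
    have hGa3 : favIn (R1 n hn q (a3 n hn)) (S2 n hn) (a3 n hn) = a0 n hn := by
      rw [R1_a3 n hn]; exact favIn_z_S2 n hn _
    rcases lo_lt_or_le q (a1 n hn) (a3 n hn) with h13 | h31
    · -- G 1 = 3 : the 0–3 cycle leaves, then 1 keeps
      have hGa1 : favIn (R1 n hn q (a1 n hn)) (S2 n hn) (a1 n hn) = a3 n hn := by
        rw [R1_a1 n hn]; exact favIn_q_S2_top3 n hn h01 h13 _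
      have hcyc2 : cyclicAgents fv (S2 n hn) = {a0 n hn, a3 n hn} := by
        refine cyclicAgents_eq ?_ ?_ (fun _ => 0) ?_ ?_
        · intro x hx
          simp only [Finset.mem_insert, Finset.mem_singleton] at hx
          rcases hx with rfl | rfl
          · exact a0_S2 n hn
          · exact a3_S2 n hn
        · intro x hx
          simp only [Finset.mem_insert, Finset.mem_singleton] at hx
          rcases hx with rfl | rfl
          · refine ⟨1, by rw [S2_card]; omega, ?_⟩
            rw [iterate_two]
            show fv (fv (a0 n hn) (S2 n hn)) (S2 n hn) = a0 n hn
            rw [show fv (a0 n hn) (S2 n hn) = a3 n hn from hGa0]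
            exact hGa3
          · refine ⟨1, by rw [S2_card]; omega, ?_⟩
            rw [iterate_two]
            show fv (fv (a3 n hn) (S2 n hn)) (S2 n hn) = a3 n hn
            rw [show fv (a3 n hn) (S2 n hn) = a0 n hn from hGa3]
            exact hGa0
        · intro j hj hjC
          rcases mem_S2_cases n hn hj with rfl | rfl | rfl
          · exact absurd (by simp : a0 n hn ∈ ({a0 n hn, a3 n hn} : Finset (Fin n))) hjC
          · left
            show favIn (R1 n hn q (a1 n hn)) (S2 n hn) (a1 n hn) ∈ _
            rw [hGa1]; simp
          · exact absurd (by simp : a3 n hn ∈ ({a0 n hn, a3 n hn} : Finset (Fin n))) hjC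
        · intro j hj
          simp only [Finset.mem_insert, Finset.mem_singleton] at hj
          rcases hj with rfl | rfl
          · show favIn (R1 n hn q (a0 n hn)) (S2 n hn) (a0 n hn) ∈ _
            rw [hGa0]; simp
          · show favIn (R1 n hn q (a3 n hn)) (S2 n hn) (a3 n hn) ∈ _
            rw [hGa3]; simp
      have hC2ne : ({a0 n hn, a3 n hn} : Finset (Fin n)).Nonempty := ⟨a0 n hn, by simp⟩
      have ha1notC2 : a1 n hn ∉ ({a0 n hn, a3 n hn} : Finset (Fin n)) := by
        simp only [Finset.mem_insert, Finset.mem_singleton]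
        push_neg
        exact ⟨Ne.symm (a0_ne_a1 n hn), Ne.symm (a3_ne_a1 n hn)⟩
      have hset : S2 n hn \ {a0 n hn, a3 n hn} = {a1 n hn} := by
        ext j
        simp only [Finset.mem_sdiff, mem_S2, Finset.mem_insert, Finset.mem_singleton,
          Fin.ext_iff]
        simp [a0, a1, a3]
        omega
      have h2 : TTCaux fv (S2 n hn) (a1 n hn)
          = TTCaux fv ({a1 n hn} : Finset (Fin n)) (a1 n hn) := by
        rw [TTCaux_not_cyclic (by rw [hcyc2]; exact hC2ne) (by rw [hcyc2]; exact ha1notC2),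
          hcyc2, hset]
      have hGa1' : favIn (R1 n hn q (a1 n hn)) ({a1 n hn} : Finset (Fin n)) (a1 n hn)
          = a1 n hn := favIn_singleton n _ _ _
      have hcyc3 : cyclicAgents fv ({a1 n hn} : Finset (Fin n)) = {a1 n hn} := by
        refine cyclicAgents_eq (Finset.Subset.refl _) ?_ (fun _ => 0) ?_ ?_
        · intro x hx
          rw [Finset.mem_singleton] at hx
          subst hx
          exact ⟨0, by simp, by simpa using hGa1'⟩
        · intro j hj hjC; exact absurd hj hjC
        · intro j hj
          rw [Finset.mem_singleton] at hj
          subst hj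
          show favIn (R1 n hn q (a1 n hn)) _ _ ∈ _
          rw [hGa1']; simp
      rw [TTC]
      show TTCaux fv Finset.univ (a1 n hn) = _
      rw [h1, h2, TTCaux_cyclic (by rw [hcyc3]; simp)]
      exact hGa1'
    · -- G 1 = 1 : everybody cyclic at stage 2
      have hGa1 : favIn (R1 n hn q (a1 n hn)) (S2 n hn) (a1 n hn) = a1 n hn := by
        rw [R1_a1 n hn]; exact favIn_q_S2_top1 n hn h01 h31 _
      have hcyc2 : cyclicAgents fv (S2 n hn) = S2 n hn := by
        refine cyclicAgents_eq (Finset.Subset.refl _) ?_ (fun _ => 0) ?_ ?_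
        · intro x hx
          rcases mem_S2_cases n hn hx with rfl | rfl | rfl
          · refine ⟨1, by rw [S2_card]; omega, ?_⟩
            rw [iterate_two]
            show fv (fv (a0 n hn) (S2 n hn)) (S2 n hn) = a0 n hn
            rw [show fv (a0 n hn) (S2 n hn) = a3 n hn from hGa0]
            exact hGa3
          · exact ⟨0, by rw [S2_card]; omega, by simpa using hGa1⟩
          · refine ⟨1, by rw [S2_card]; omega, ?_⟩
            rw [iterate_two]
            show fv (fv (a3 n hn) (S2 n hn)) (S2 n hn) = a3 n hn
            rw [show fv (a3 n hn) (S2 n hn) = a0 n hn from hGa3]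
            exact hGa0
        · intro j hj hjC
          exact absurd hj hjC
        · intro j hj
          rcases mem_S2_cases n hn hj with rfl | rfl | rfl
          · show favIn (R1 n hn q (a0 n hn)) (S2 n hn) (a0 n hn) ∈ _
            rw [hGa0]; exact a3_S2 n hn
          · show favIn (R1 n hn q (a1 n hn)) (S2 n hn) (a1 n hn) ∈ _
            rw [hGa1]; exact a1_S2 n hn
          · show favIn (R1 n hn q (a3 n hn)) (S2 n hn) (a3 n hn) ∈ _
            rw [hGa3]; exact a0_S2 n hn
      rw [TTC]
      show TTCaux fv Finset.univ (a1 n hn) = _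
      rw [h1, TTCaux_cyclic (by rw [hcyc2]; exact a1_S2 n hn)]
      exact hGa1

end Slice1


section Pg

/-- the profile used for the group-manipulation: agent 0 deviates at `P⋆`
to the preference `e₃` with peak `o₃`. -/
def Pg : Fin n → LinearOrder (Fin n) := Function.update (Pstar n) (a0 n hn) (ek n 3)

lemma Pg_a0 : Pg n hn (a0 n hn) = ek n 3 := by rw [Pg, Function.update_self]
lemma Pg_a1 : Pg n hn (a1 n hn) = z n := by
  rw [Pg, Function.update_of_ne (Ne.symm (a0_ne_a1 n hn)), Pstar_a1 n hn]
lemma Pg_a3 : Pg n hn (a3 n hn) = z n := by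
  rw [Pg, Function.update_of_ne (Ne.symm (a0_ne_a3 n hn)), Pstar_a3 n hn]
lemma Pg_off : ∀ j : Fin n, j.val ≠ 0 → j.val ≠ 1 → j.val ≠ 3 →
    Pg n hn j = Pstar n j := by
  intro j h0 _ _
  rw [Pg, Function.update_of_ne (fun h => h0 (by rw [h]; rfl))]

lemma TTC_Pg : TTC (Pg n hn) (a0 n hn) = a3 n hn ∧ TTC (Pg n hn) (a1 n hn) = a1 n hn := by
  set fv : Fin n → Finset (Fin n) → Fin n := fun j S => favIn (Pg n hn j) S j with hfv
  have hFa0 : favIn (Pg n hn (a0 n hn)) Finset.univ (a0 n hn) = a3 n hn := by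
    rw [Pg_a0 n hn, favIn_ek_univ n 3 (by omega)]
    exact Fin.ext rfl
  have hFa1 : favIn (Pg n hn (a1 n hn)) Finset.univ (a1 n hn) = a0 n hn := by
    rw [Pg_a1 n hn]; exact favIn_z_univ n hn _
  have hFa3 : favIn (Pg n hn (a3 n hn)) Finset.univ (a3 n hn) = a0 n hn := by
    rw [Pg_a3 n hn]; exact favIn_z_univ n hn _
  have hFfix : ∀ j : Fin n, j.val ≠ 0 → j.val ≠ 1 → j.val ≠ 3 →
      favIn (Pg n hn j) Finset.univ j = j := by
    intro j h0 h1 h3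
    rw [Pg_off n hn j h0 h1 h3]
    exact F1_fix n hn (Pstar n) (fun _ _ _ _ => rfl) j h0 h1 h3
  have hcyc1 : cyclicAgents fv Finset.univ
      = Finset.univ \ {a1 n hn} := by
    refine cyclicAgents_eq Finset.sdiff_subset ?_ (fun _ => 0) ?_ ?_
    · intro i hi
      simp only [Finset.mem_sdiff, Finset.mem_univ, true_and,
        Finset.mem_singleton] at hi
      by_cases hi0 : i = a0 n hn
      · subst hi0
        refine ⟨1, by rw [card_univ_fin]; omega, ?_⟩
        rw [iterate_two]
        show fv (fv (a0 n hn) Finset.univ) Finset.univ = a0 n hn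
        rw [show fv (a0 n hn) Finset.univ = a3 n hn from hFa0]
        exact hFa3
      · by_cases hi3 : i = a3 n hn
        · subst hi3
          refine ⟨1, by rw [card_univ_fin]; omega, ?_⟩
          rw [iterate_two]
          show fv (fv (a3 n hn) Finset.univ) Finset.univ = a3 n hn
          rw [show fv (a3 n hn) Finset.univ = a0 n hn from hFa3]
          exact hFa0
        · refine ⟨0, by rw [card_univ_fin]; omega, ?_⟩
          have : favIn (Pg n hn i) Finset.univ i = i :=
            hFfix i (fun h => hi0 (Fin.ext (by simpa using h)))
              (fun h => hi (Fin.ext (by simpa using h)))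
              (fun h => hi3 (Fin.ext (by simpa using h)))
          simpa using this
    · intro j _ hjC
      have hj1 : j = a1 n hn := by
        by_contra hcon
        exact hjC (by simp [hcon])
      subst hj1
      left
      show favIn (Pg n hn (a1 n hn)) Finset.univ (a1 n hn) ∈ _
      rw [hFa1]
      simp only [Finset.mem_sdiff, Finset.mem_univ, true_and, Finset.mem_singleton]
      exact a0_ne_a1 n hn
    · intro j hj
      simp only [Finset.mem_sdiff, Finset.mem_univ, true_and,
        Finset.mem_singleton] at hj
      show favIn (Pg n hn j) Finset.univ j ∈ _
      by_cases hj0 : j = a0 n hn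
      · subst hj0
        rw [hFa0]
        simp only [Finset.mem_sdiff, Finset.mem_univ, true_and, Finset.mem_singleton]
        exact a3_ne_a1 n hn
      · by_cases hj3 : j = a3 n hn
        · subst hj3
          rw [hFa3]
          simp only [Finset.mem_sdiff, Finset.mem_univ, true_and, Finset.mem_singleton]
          exact a0_ne_a1 n hn
        · rw [hFfix j (fun h => hj0 (Fin.ext (by simpa using h)))
            (fun h => hj (Fin.ext (by simpa using h)))
            (fun h => hj3 (Fin.ext (by simpa using h)))]
          simp only [Finset.mem_sdiff, Finset.mem_univ, true_and, Finset.mem_singleton]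
          exact hj
  constructor
  · rw [TTC]
    show TTCaux fv Finset.univ (a0 n hn) = _
    have h0C : a0 n hn ∈ cyclicAgents fv Finset.univ := by
      rw [hcyc1]
      simp only [Finset.mem_sdiff, Finset.mem_univ, true_and, Finset.mem_singleton]
      exact a0_ne_a1 n hn
    rw [TTCaux_cyclic h0C]
    exact hFa0
  · rw [TTC]
    show TTCaux fv Finset.univ (a1 n hn) = _
    have hC1ne : (Finset.univ \ {a1 n hn} : Finset (Fin n)).Nonempty :=
      ⟨a0 n hn, by simp only [Finset.mem_sdiff, Finset.mem_univ, true_and,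
        Finset.mem_singleton]; exact a0_ne_a1 n hn⟩
    have h1 : TTCaux fv Finset.univ (a1 n hn)
        = TTCaux fv ({a1 n hn} : Finset (Fin n)) (a1 n hn) := by
      rw [TTCaux_not_cyclic (by rw [hcyc1]; exact hC1ne) (by rw [hcyc1]; simp),
        hcyc1, univ_sdiff_sdiff]
    have hGa1 : favIn (Pg n hn (a1 n hn)) ({a1 n hn} : Finset (Fin n)) (a1 n hn)
        = a1 n hn := favIn_singleton n _ _ _
    have hcyc3 : cyclicAgents fv ({a1 n hn} : Finset (Fin n)) = {a1 n hn} := by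
      refine cyclicAgents_eq (Finset.Subset.refl _) ?_ (fun _ => 0) ?_ ?_
      · intro x hx
        rw [Finset.mem_singleton] at hx
        subst hx
        exact ⟨0, by simp, by simpa using hGa1⟩
      · intro j hj hjC; exact absurd hj hjC
      · intro j hj
        rw [Finset.mem_singleton] at hj
        subst hj
        show favIn (Pg n hn (a1 n hn)) _ _ ∈ _
        rw [hGa1]; simp
    rw [h1, TTCaux_cyclic (by rw [hcyc3]; simp)]
    exact hGa1

end Pg


/-! ### Properties of the mechanism ψ -/

section Final

lemma pistar_a0 : pistar n hn (a0 n hn) = a3 n hn := by simp [pistar]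
lemma pistar_a1 : pistar n hn (a1 n hn) = a0 n hn := by simp [pistar, a1]
lemma pistar_a3 : pistar n hn (a3 n hn) = a1 n hn := by simp [pistar, a3]

/-- inverse of `pistar`. -/
def invp : Fin n → Fin n := fun i =>
  if i.val = 3 then a0 n hn else if i.val = 0 then a1 n hn
  else if i.val = 1 then a3 n hn else i

lemma pistar_bijective : Function.Bijective (pistar n hn) := by
  apply Function.bijective_iff_has_inverse.mpr
  refine ⟨invp n hn, ?_, ?_⟩
  · intro i
    by_cases h0 : i.val = 0
    · have : pistar n hn i = a3 n hn := by simp [pistar, h0]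
      rw [this]
      show invp n hn (a3 n hn) = i
      simp [invp, a3]
      exact (Fin.ext (by simpa using h0)).symm
    · by_cases h1 : i.val = 1
      · have : pistar n hn i = a0 n hn := by simp [pistar, h0, h1]
        rw [this]
        show invp n hn (a0 n hn) = i
        simp [invp, a0]
        exact (Fin.ext (by simpa using h1)).symm
      · by_cases h3 : i.val = 3
        · have : pistar n hn i = a1 n hn := by simp [pistar, h0, h1, h3]
          rw [this]
          show invp n hn (a1 n hn) = i
          simp [invp, a1]
          exact (Fin.ext (by simpa using h3)).symm
        · have : pistar n hn i = i := by simp [pistar, h0, h1, h3]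
          rw [this]
          simp [invp, h0, h1, h3]
  · intro i
    by_cases h3 : i.val = 3
    · have : invp n hn i = a0 n hn := by simp [invp, h3]
      rw [this, pistar_a0 n hn]
      exact (Fin.ext (by simpa using h3)).symm
    · by_cases h0 : i.val = 0
      · have : invp n hn i = a1 n hn := by simp [invp, h3, h0]
        rw [this, pistar_a1 n hn]
        exact (Fin.ext (by simpa using h0)).symm
      · by_cases h1 : i.val = 1
        · have : invp n hn i = a3 n hn := by simp [invp, h3, h0, h1]
          rw [this, pistar_a3 n hn]
          exact (Fin.ext (by simpa using h1)).symm
        · have : invp n hn i = i := by simp [invp, h3, h0, h1]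
          rw [this]
          simp [pistar, h3, h0, h1]

lemma pistar_eq_TTC {i : Fin n} (h1 : i ≠ a1 n hn) (h3 : i ≠ a3 n hn) :
    pistar n hn i = TTC (Pstar n) i := by
  rw [TTC_Pstar n hn i]
  have hv1 : i.val ≠ 1 := fun h => h1 (Fin.ext (by simpa using h))
  have hv3 : i.val ≠ 3 := fun h => h3 (Fin.ext (by simpa using h))
  simp only [pistar]
  by_cases h0 : i.val = 0
  · rw [if_pos h0, if_pos h0]
  · rw [if_neg h0, if_neg hv1, if_neg hv3, if_neg h0, if_neg hv3]

lemma psi_at_Pstar : psi n hn (Pstar n) = pistar n hn := by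
  rw [psi, if_pos rfl]

lemma psi_at_other {P : Fin n → LinearOrder (Fin n)} (h : P ≠ Pstar n) :
    psi n hn P = TTC P := by
  rw [psi, if_neg h]

lemma psi_bijective (P : Fin n → LinearOrder (Fin n)) :
    Function.Bijective (psi n hn P) := by
  by_cases h : P = Pstar n
  · rw [h, psi_at_Pstar n hn]; exact pistar_bijective n hn
  · rw [psi_at_other n hn h]; exact TTCthy.TTC_bijective P

lemma top_Pstar (j : Fin n) : topOf (Pstar n j) j =
    if j.val = 0 then a2 n hn else if j.val = 1 then a0 n hn
    else if j.val = 3 then a0 n hn else j := by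
  show favIn (Pstar n j) Finset.univ j = _
  by_cases h0 : j.val = 0
  · have hj : j = a0 n hn := Fin.ext (by simpa using h0)
    rw [hj, Pstar_a0 n hn, favIn_w_univ n hn]
    simp [a0]
  · by_cases h1 : j.val = 1
    · have hj : j = a1 n hn := Fin.ext (by simpa using h1)
      rw [hj, Pstar_a1 n hn, favIn_z_univ n hn]
      simp [a1]
    · by_cases h3 : j.val = 3
      · have hj : j = a3 n hn := Fin.ext (by simpa using h3)
        rw [hj, Pstar_a3 n hn, favIn_z_univ n hn]
        simp [a3]
      · rw [F1_fix n hn (Pstar n) (fun _ _ _ _ => rfl) j h0 h1 h3]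
        rw [if_neg h0, if_neg h1, if_neg h3]

theorem psi_LU : LocallyUnanimous {p : LinearOrder (Fin n) | SinglePeaked p}
    (psi n hn) := by
  intro P _ J _ μ hbij hμ i hiJ
  by_cases hPs : P = Pstar n
  · subst hPs
    rw [psi_at_Pstar n hn]
    have hnot0 : a0 n hn ∉ J := by
      intro h0J
      have h02 : μ (a0 n hn) = a2 n hn := by
        rw [hμ _ h0J, top_Pstar n hn]; simp [a0]
      have h2J : a2 n hn ∈ J := by
        have := hbij.mapsTo (Finset.mem_coe.mpr h0J)
        rw [h02] at this
        exact Finset.mem_coe.mp this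
      have h22 : μ (a2 n hn) = a2 n hn := by
        rw [hμ _ h2J, top_Pstar n hn]; simp [a2]
      have : a0 n hn = a2 n hn :=
        hbij.injOn (Finset.mem_coe.mpr h0J) (Finset.mem_coe.mpr h2J)
          (h02.trans h22.symm)
      exact a0_ne_a2 n hn this
    have hnot1 : a1 n hn ∉ J := by
      intro h1J
      have h10 : μ (a1 n hn) = a0 n hn := by
        rw [hμ _ h1J, top_Pstar n hn]; simp [a1]
      have h0J : a0 n hn ∈ J := by
        have := hbij.mapsTo (Finset.mem_coe.mpr h1J)
        rw [h10] at this
        exact Finset.mem_coe.mp this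
      exact hnot0 h0J
    have hnot3 : a3 n hn ∉ J := by
      intro h3J
      have h30 : μ (a3 n hn) = a0 n hn := by
        rw [hμ _ h3J, top_Pstar n hn]; simp [a3]
      have h0J : a0 n hn ∈ J := by
        have := hbij.mapsTo (Finset.mem_coe.mpr h3J)
        rw [h30] at this
        exact Finset.mem_coe.mp this
      exact hnot0 h0J
    have hv0 : i.val ≠ 0 := fun h => hnot0 (by rwa [show a0 n hn = i from Fin.ext (by simpa using h.symm)])
    have hv1 : i.val ≠ 1 := fun h => hnot1 (by rwa [show a1 n hn = i from Fin.ext (by simpa using h.symm)])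
    have hv3 : i.val ≠ 3 := fun h => hnot3 (by rwa [show a3 n hn = i from Fin.ext (by simpa using h.symm)])
    have hpis : pistar n hn i = i := by simp [pistar, hv0, hv1, hv3]
    have hμi : μ i = i := by
      rw [hμ _ hiJ, top_Pstar n hn, if_neg hv0, if_neg hv1, if_neg hv3]
    rw [hpis, hμi]
  · rw [psi_at_other n hn hPs]
    exact TTCthy.TTC_LU P J μ hbij hμ i hiJ

theorem psi_SP : StrategyProof {p : LinearOrder (Fin n) | SinglePeaked p}
    (psi n hn) := by
  intro P hP i q hq
  simp only [Set.mem_setOf_eq] at hq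
  have hPi : SinglePeaked (P i) := hP i
  by_cases hP's : Function.update P i q = Pstar n
  · by_cases hPs : P = Pstar n
    · rw [show psi n hn (Function.update P i q) = psi n hn P from by rw [hP's, hPs]]
      exact lo_lt_irrefl (P i) _
    · -- the deviation moves the profile onto P⋆
      have hoff : ∀ j, j ≠ i → P j = Pstar n j := fun j hj => by
        have := congrFun hP's j
        rwa [Function.update_of_ne hj] at this
      rw [psi_at_other n hn hPs, hP's, psi_at_Pstar n hn]
      by_cases hi1 : i = a1 n hn
      · subst hi1
        have hr : P (a1 n hn) ≠ z n := by
          intro h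
          apply hPs
          funext j
          by_cases hj : j = a1 n hn
          · subst hj; rw [h]; exact (Pstar_a1 n hn).symm
          · exact hoff j hj
        have hPeq : P = R1 n hn (P (a1 n hn)) := by
          funext j
          by_cases hj : j = a1 n hn
          · subst hj; rw [R1, Function.update_self]
          · rw [R1, Function.update_of_ne hj]; exact hoff j hj
        have hTTC : TTC P (a1 n hn) = a1 n hn := by
          conv_lhs => rw [hPeq]
          exact TTC_slice1 n hn _ (hP _) hr
        rw [hTTC, pistar_a1 n hn]
        have h01 : (P (a1 n hn)).lt (a0 n hn) (a1 n hn) := by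
          rcases q_cases n hn (hP (a1 n hn)) with h | h
          · exact absurd h hr
          · exact h
        exact lo_lt_asymm _ h01
      · by_cases hi3 : i = a3 n hn
        · subst hi3
          have hr : P (a3 n hn) ≠ z n := by
            intro h
            apply hPs
            funext j
            by_cases hj : j = a3 n hn
            · subst hj; rw [h]; exact (Pstar_a3 n hn).symm
            · exact hoff j hj
          have hPeq : P = R3 n hn (P (a3 n hn)) := by
            funext j
            by_cases hj : j = a3 n hn
            · subst hj; rw [R3, Function.update_self]
            · rw [R3, Function.update_of_ne hj]; exact hoff j hj
          rw [pistar_a3 n hn]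
          rcases lo_lt_or_le (P (a3 n hn)) (a1 n hn) (a3 n hn) with h13 | h31
          · have hTTC : TTC P (a3 n hn) = a3 n hn := by
              conv_lhs => rw [hPeq]
              exact TTC_slice3_hi n hn _ (hP _) hr h13
            rw [hTTC]
            exact lo_lt_asymm _ h13
          · have hTTC : TTC P (a3 n hn) = a1 n hn := by
              conv_lhs => rw [hPeq]
              exact TTC_slice3_lo n hn _ (hP _) hr h31
            rw [hTTC]
            exact lo_lt_irrefl (P (a3 n hn)) _
        · rw [pistar_eq_TTC n hn hi1 hi3, ← hP's]
          exact TTCthy.TTC_SP P i q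
  · by_cases hPs : P = Pstar n
    · subst hPs
      rw [psi_at_Pstar n hn, psi_at_other n hn hP's]
      by_cases hi1 : i = a1 n hn
      · subst hi1
        rw [pistar_a1 n hn]
        intro hlt
        rw [Pstar_a1 n hn, z_lt] at hlt
        simp at hlt
      · by_cases hi3 : i = a3 n hn
        · subst hi3
          rw [pistar_a3 n hn]
          have hqz : q ≠ z n := by
            intro h
            apply hP's
            subst h
            funext j
            by_cases hj : j = a3 n hn
            · subst hj; rw [Function.update_self]; exact (Pstar_a3 n hn).symm
            · rw [Function.update_of_ne hj]
          have hP'eq : Function.update (Pstar n) (a3 n hn) q = R3 n hn q := rfl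
          rcases lo_lt_or_le q (a1 n hn) (a3 n hn) with h13 | h31
          · rw [hP'eq, TTC_slice3_hi n hn q hq hqz h13]
            intro hlt
            rw [Pstar_a3 n hn, z_lt] at hlt
            simp [a1, a3] at hlt
          · rw [hP'eq, TTC_slice3_lo n hn q hq hqz h31]
            exact lo_lt_irrefl (Pstar n (a3 n hn)) _
        · rw [pistar_eq_TTC n hn hi1 hi3]
          exact TTCthy.TTC_SP (Pstar n) i q
    · rw [psi_at_other n hn hPs, psi_at_other n hn hP's]
      exact TTCthy.TTC_SP P i q

include hn in
lemma ek3_ne_w : ek n 3 ≠ w n := by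
  intro h
  have h1 : (ek n 3).le (a3 n hn) (a2 n hn) ↔ (w n).le (a3 n hn) (a2 n hn) := by
    rw [h]
  rw [ek, ofUtil_le, w, ofUtil_le] at h1
  simp only [ue, uw, a3_val, a2_val] at h1
  norm_num at h1
  omega

lemma Pg_ne_Pstar : Pg n hn ≠ Pstar n := by
  intro h
  have := congrFun h (a0 n hn)
  rw [Pg_a0 n hn, Pstar_a0 n hn] at this
  exact ek3_ne_w n hn this

theorem psi_not_GSP :
    ¬ GroupStrategyProof {p : LinearOrder (Fin n) | SinglePeaked p} (psi n hn) := by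
  intro h
  have hP : ∀ i, Pg n hn i ∈ {p : LinearOrder (Fin n) | SinglePeaked p} := by
    intro i
    by_cases hi : i = a0 n hn
    · subst hi; rw [Pg_a0 n hn]
      exact sp_ek n 3 (by omega)
    · rw [Pg, Function.update_of_ne hi]
      exact sp_Pstar n hn _
  have hP' : ∀ i, Pstar n i ∈ {p : LinearOrder (Fin n) | SinglePeaked p} :=
    fun i => sp_Pstar n hn i
  have hJne : ({a0 n hn, a1 n hn} : Finset (Fin n)).Nonempty := ⟨a0 n hn, by simp⟩
  have hoff : ∀ i ∉ ({a0 n hn, a1 n hn} : Finset (Fin n)), Pstar n i = Pg n hn i := by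
    intro i hi
    simp only [Finset.mem_insert, Finset.mem_singleton] at hi
    push_neg at hi
    rw [Pg, Function.update_of_ne hi.1]
  apply h (Pg n hn) (Pstar n) hP hP' _ hJne hoff
  have hpsiPg : psi n hn (Pg n hn) = TTC (Pg n hn) := psi_at_other n hn (Pg_ne_Pstar n hn)
  obtain ⟨hg0, hg1⟩ := TTC_Pg n hn
  constructor
  · intro i hi
    simp only [Finset.mem_insert, Finset.mem_singleton] at hi
    rcases hi with rfl | rfl
    · rw [hpsiPg, psi_at_Pstar n hn, hg0, pistar_a0 n hn]
      exact lo_le_refl (Pg n hn (a0 n hn)) _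
    · rw [hpsiPg, psi_at_Pstar n hn, hg1, pistar_a1 n hn]
      rw [Pg_a1 n hn, z_le]
      simp
  · refine ⟨a1 n hn, by simp, ?_⟩
    rw [hpsiPg, psi_at_Pstar n hn, hg1, pistar_a1 n hn]
    rw [Pg_a1 n hn, z_lt]
    simp

lemma psi_ne_TTC : psi n hn (Pstar n) ≠ TTC (Pstar n) := by
  intro h
  have h3 := congrFun h (a3 n hn)
  rw [psi_at_Pstar n hn, pistar_a3 n hn, TTC_Pstar n hn] at h3
  rw [if_neg (by simp : (a3 n hn).val ≠ 0), if_pos (by simp : (a3 n hn).val = 3)] at h3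
  have := congrArg Fin.val h3
  simp [a0, a1] at this

end Final

end Stmt13

end Stmt13


/-- For every `n ≥ 4`, on the single-peaked preference domain
(with respect to `o_1 ▷ o_2 ▷ ⋯ ▷ o_n`) there exists a mechanism that is
locally unanimous and strategy-proof but is not group strategy-proof and
differs from the TTC mechanism. -/
theorem stmt_13 (n : ℕ) (hn : 4 ≤ n) :
    ∃ ψ : (Fin n → LinearOrder (Fin n)) → Fin n → Fin n,
      (∀ P : Fin n → LinearOrder (Fin n), (∀ i, SinglePeaked (P i)) →
        Function.Bijective (ψ P)) ∧
      LocallyUnanimous {p | SinglePeaked p} ψ ∧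
      StrategyProof {p | SinglePeaked p} ψ ∧
      ¬ GroupStrategyProof {p | SinglePeaked p} ψ ∧
      ∃ P : Fin n → LinearOrder (Fin n), (∀ i, SinglePeaked (P i)) ∧ ψ P ≠ TTC P := by
  refine ⟨Stmt13.psi n hn, ?_, ?_, ?_, ?_, ?_⟩
  · intro P _
    exact Stmt13.Stmt13.psi_bijective n hn P
  · exact Stmt13.Stmt13.psi_LU n hn
  · exact Stmt13.Stmt13.psi_SP n hn
  · exact Stmt13.Stmt13.psi_not_GSP n hn
  · exact ⟨Stmt13.Pstar n, Stmt13.sp_Pstar n hn, Stmt13.Stmt13.psi_ne_TTC n hn⟩
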